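/- arXiv:2402.10678 — 10 statements merged into one kernel-verified Lean document; each statement's English description precedes it below -/
import Mathlib

section
/- If A ⊆ V is a local set of a finite simple graph G (i.e. A = D ∪ Odd(D) for some nonempty-generating D, with A nonempty), then for every a ∈ A, cutrk(A) ≤ cutrk(A ∖ {a}). -/
open Finset
open scoped Classical symmDiff

variable {V : Type*} [Fintype V] [DecidableEq V]

/-- The odd neighborhood of a set of vertices `D`: vertices having an odd
number of neighbors in `D`. -/
noncomputable def oddNbhd (G : SimpleGraph V) (D : Finset V) : Finset V :=
  Finset.univ.filter fun v => Odd (D.filter (G.Adj v)).card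

/-- The cut-rank of `A`: the rank over `F₂` of the cut matrix between `A` and its complement. -/
noncomputable def cutrk (G : SimpleGraph V) (A : Finset V) : ℕ :=
  (Matrix.of fun (a : {x // x ∈ A}) (b : {x // x ∈ Aᶜ}) =>
    if G.Adj a.1 b.1 then (1 : ZMod 2) else 0).rank

/-- A local set: a nonempty set of the form `D ∪ Odd(D)`. -/
noncomputable def IsLocalSet (G : SimpleGraph V) (A : Finset V) : Prop :=
  A.Nonempty ∧ ∃ D : Finset V, A = D ∪ oddNbhd G D

/-- A minimal local set: a local set minimal by inclusion. -/
noncomputable def IsMLS (G : SimpleGraph V) (A : Finset V) : Prop :=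
  IsLocalSet G A ∧ ∀ B ⊂ A, ¬ IsLocalSet G B

private lemma zmod2_even {n : ℕ} (h : Even n) : (n : ZMod 2) = 0 := by
  rw [← ZMod.natCast_mod, Nat.even_iff.mp h]; rfl

private lemma zmod2_odd {n : ℕ} (h : Odd n) : (n : ZMod 2) = 1 := by
  rw [← ZMod.natCast_mod, Nat.odd_iff.mp h]; rfl

private lemma rank_le_of_rows_mem {ι ι' κ κ' : Type*} [Fintype ι] [Fintype ι'] [Fintype κ] [Fintype κ']
    (M : Matrix ι κ (ZMod 2)) (M' : Matrix ι' κ' (ZMod 2))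
    (ψ : (κ' → ZMod 2) →ₗ[ZMod 2] (κ → ZMod 2))
    (h : ∀ i, M i ∈ Submodule.map ψ (Submodule.span (ZMod 2) (Set.range M'))) :
    M.rank ≤ M'.rank := by
  rw [Matrix.rank_eq_finrank_span_row, Matrix.rank_eq_finrank_span_row]
  exact le_trans (Submodule.finrank_mono (Submodule.span_le.2 (Set.range_subset_iff.2 h)))
    (Submodule.finrank_map_le ψ _)

theorem localSet_cutrk_le (G : SimpleGraph V) (A : Finset V) (hA : IsLocalSet G A) :
    ∀ a ∈ A, cutrk G A ≤ cutrk G (A.erase a) := by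
  unfold cutrk
  obtain ⟨-, D, hD⟩ := hA
  intro a ha
  have hDA : D ⊆ A := hD ▸ Finset.subset_union_left
  -- parity fact for vertices outside A
  have hEven : ∀ v, v ∉ A → Even ((D.filter fun d => G.Adj d v).card) := by
    intro v hv
    have h1 : (D.filter fun d => G.Adj d v) = D.filter (G.Adj v) :=
      Finset.filter_congr (fun d _ => by rw [G.adj_comm])
    rw [h1]
    by_contra h
    exact hv (hD ▸ Finset.mem_union_right _
      (Finset.mem_filter.2 ⟨Finset.mem_univ _, Nat.not_even_iff_odd.1 h⟩))
  set A' := A.erase a with hA'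
  have hsub : ∀ v : {x // x ∈ Aᶜ}, v.1 ∈ A'ᶜ := fun v =>
    Finset.mem_compl.2 (fun h => Finset.mem_compl.1 v.2 (Finset.mem_of_mem_erase h))
  have haC : a ∈ A'ᶜ := Finset.mem_compl.2 (Finset.notMem_erase a A)
  set M : Matrix {x // x ∈ A} {x // x ∈ Aᶜ} (ZMod 2) :=
    Matrix.of fun x y => if G.Adj x.1 y.1 then (1 : ZMod 2) else 0 with hM
  set M' : Matrix {x // x ∈ A'} {x // x ∈ A'ᶜ} (ZMod 2) :=
    Matrix.of fun x y => if G.Adj x.1 y.1 then (1 : ZMod 2) else 0 with hM'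
  show M.rank ≤ M'.rank
  set ι₁ : {x // x ∈ Aᶜ} → {x // x ∈ A'ᶜ} := fun v => ⟨v.1, hsub v⟩ with hι₁
  set aC : {x // x ∈ A'ᶜ} := ⟨a, haC⟩ with haCd
  set u : {x // x ∈ Aᶜ} → ZMod 2 :=
    fun v => if a ∈ D then 0 else (if G.Adj a v.1 then 1 else 0) with hu
  set ψ : ({x // x ∈ A'ᶜ} → ZMod 2) →ₗ[ZMod 2] ({x // x ∈ Aᶜ} → ZMod 2) :=
    LinearMap.pi (fun v => LinearMap.proj (ι₁ v) + u v • LinearMap.proj aC) with hψ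
  have hψap : ∀ x v, ψ x v = x (ι₁ v) + u v * x aC := by
    intro x v
    simp [hψ, smul_eq_mul]
  -- the dependent combination of rows of M'
  set w : {x // x ∈ A'ᶜ} → ZMod 2 :=
    ∑ d ∈ Finset.univ.filter (fun d : {x // x ∈ A'} => d.1 ∈ D), M' d with hw
  have hwmem : w ∈ Submodule.span (ZMod 2) (Set.range M') :=
    Submodule.sum_mem _ (fun d _ => Submodule.subset_span ⟨d, rfl⟩)
  have hwv : ∀ v : {x // x ∈ A'ᶜ},
      w v = (((D.erase a).filter fun d => G.Adj d v.1).card : ZMod 2) := by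
    intro v
    have e1 : A'.filter (· ∈ D) = D.erase a := by
      ext x
      simp only [hA', Finset.mem_filter, Finset.mem_erase]
      constructor
      · rintro ⟨⟨hx1, _⟩, hx2⟩; exact ⟨hx1, hx2⟩
      · rintro ⟨hx1, hx2⟩; exact ⟨⟨hx1, hDA hx2⟩, hx2⟩
    calc w v = ∑ d ∈ Finset.univ.filter (fun d : {x // x ∈ A'} => d.1 ∈ D),
            (if G.Adj d.1 v.1 then (1 : ZMod 2) else 0) := by
          rw [hw]; exact Finset.sum_apply v _ (fun d => M' d)
      _ = ∑ d : {x // x ∈ A'}, (if d.1 ∈ D then (if G.Adj d.1 v.1 then (1 : ZMod 2) else 0) else 0) := by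
          rw [Finset.sum_filter]
      _ = ∑ d ∈ A', (if d ∈ D then (if G.Adj d v.1 then (1 : ZMod 2) else 0) else 0) :=
          (Finset.sum_subtype (p := fun x => x ∈ A') A' (fun x => Iff.rfl)
            (fun d => if d ∈ D then (if G.Adj d v.1 then (1 : ZMod 2) else 0) else 0)).symm
      _ = ∑ d ∈ A'.filter (· ∈ D), (if G.Adj d v.1 then (1 : ZMod 2) else 0) :=
          (Finset.sum_filter _ _).symm
      _ = (((D.erase a).filter fun d => G.Adj d v.1).card : ZMod 2) := by
          rw [e1, Finset.sum_boole]
  -- value of w on columns outside A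
  have hw1 : ∀ v : {x // x ∈ Aᶜ},
      w (ι₁ v) = (if a ∈ D then (if G.Adj a v.1 then (1 : ZMod 2) else 0) else 0) := by
    intro v
    have hvA : v.1 ∉ A := Finset.mem_compl.1 v.2
    have hEv := hEven v.1 hvA
    rw [hwv, Finset.filter_erase]
    by_cases haD : a ∈ D
    · by_cases hadj : G.Adj a v.1
      · have hmem : a ∈ D.filter fun d => G.Adj d v.1 := Finset.mem_filter.2 ⟨haD, hadj⟩
        have hodd : Odd (((D.filter fun d => G.Adj d v.1).erase a).card) := by
          have h2 := Finset.card_erase_add_one hmem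
          rcases hEv with ⟨k, hk⟩
          rw [Nat.odd_iff]; omega
        rw [if_pos haD, if_pos hadj, zmod2_odd hodd]
      · have hmem : a ∉ D.filter fun d => G.Adj d v.1 := fun h => hadj (Finset.mem_filter.1 h).2
        rw [Finset.erase_eq_of_notMem hmem]
        simp [haD, hadj, zmod2_even hEv]
    · have hmem : a ∉ D.filter fun d => G.Adj d v.1 := fun h => haD (Finset.mem_filter.1 h).1
      rw [Finset.erase_eq_of_notMem hmem]
      simp [haD, zmod2_even hEv]
  -- value of w at column a when a ∉ D
  have hw2 : a ∉ D → w aC = 1 := by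
    intro haD
    have hodd : Odd ((D.filter (G.Adj a)).card) := by
      have : a ∈ oddNbhd G D := by
        rcases Finset.mem_union.1 (hD ▸ ha) with h | h
        · exact absurd h haD
        · exact h
      exact (Finset.mem_filter.1 this).2
    have h1 : (D.filter fun d => G.Adj d a) = D.filter (G.Adj a) :=
      Finset.filter_congr (fun d _ => by rw [G.adj_comm])
    rw [hwv, Finset.erase_eq_of_notMem haD, h1, zmod2_odd hodd]
  -- main application
  apply rank_le_of_rows_mem M M' ψ
  intro b
  by_cases hb : b.1 = a
  · -- row a
    refine ⟨w, hwmem, ?_⟩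
    funext v
    rw [hψap, hw1]
    by_cases haD : a ∈ D
    · simp only [haD, if_true, hu, hM, Matrix.of_apply, hb]
      ring
    · rw [hw2 haD]
      simp only [haD, if_false, hu, hM, Matrix.of_apply, hb]
      ring
  · -- other rows
    have hbA' : b.1 ∈ A' := Finset.mem_erase.2 ⟨hb, b.2⟩
    set b' : {x // x ∈ A'} := ⟨b.1, hbA'⟩ with hb'
    by_cases haD : a ∈ D
    · refine ⟨M' b', Submodule.subset_span ⟨b', rfl⟩, ?_⟩
      funext v
      rw [hψap]
      simp [hu, haD, hM, hM', hι₁, hb']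
    · refine ⟨M' b' + M' b' aC • w,
        Submodule.add_mem _ (Submodule.subset_span ⟨b', rfl⟩) (Submodule.smul_mem _ _ hwmem), ?_⟩
      funext v
      rw [hψap]
      have e1 : (M' b' + M' b' aC • w) (ι₁ v) = M' b' (ι₁ v) + M' b' aC * w (ι₁ v) := rfl
      have e2 : (M' b' + M' b' aC • w) aC = M' b' aC + M' b' aC * w aC := rfl
      have e3 : w (ι₁ v) = 0 := by rw [hw1 v]; simp [haD]
      rw [e1, e2, hw2 haD, e3, mul_zero, add_zero, mul_one]
      have e4 : M' b' aC + M' b' aC = 0 := by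
        have h2 : (2 : ZMod 2) = 0 := rfl
        calc M' b' aC + M' b' aC = 2 * M' b' aC := by ring
          _ = 0 := by rw [h2, zero_mul]
      rw [e4, mul_zero, add_zero]
      rfl
end

section
/- A set A ⊆ V is a minimal local set of a finite simple graph G if and only if A is not full cut-rank but every proper subset of A is full cut-rank; equivalently, for all a ∈ A, cutrk(A) ≤ cutrk(A∖{a}) = |A| − 1. -/
open Finset
open scoped Classical symmDiff

variable {V : Type*} [Fintype V] [DecidableEq V]

lemma oddNbhd_empty (G : SimpleGraph V) : oddNbhd G ∅ = ∅ := by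
  simp [oddNbhd]

lemma zmod2_cases (x : ZMod 2) : x = 0 ∨ x = 1 := by revert x; decide

/-- column-sum computation -/
lemma colsum (G : SimpleGraph V) (A D : Finset V) (hD : D ⊆ A)
    (g : {x // x ∈ A} → ZMod 2) (hg : ∀ a, g a = 1 ↔ a.1 ∈ D) (b : V) :
    ∑ a : {x // x ∈ A}, g a * (if G.Adj a.1 b then 1 else 0) =
      ((D.filter (G.Adj b)).card : ZMod 2) := by
  have h1 : ∀ a : {x // x ∈ A},
      g a * (if G.Adj a.1 b then 1 else 0) =
        (if a.1 ∈ D ∧ G.Adj a.1 b then (1 : ZMod 2) else 0) := by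
    intro a
    rcases zmod2_cases (g a) with h | h
    · have hnd : a.1 ∉ D := fun hd => by simp [(hg a).2 hd] at h
      simp [h, hnd]
    · have hd : a.1 ∈ D := (hg a).1 h
      by_cases hadj : G.Adj a.1 b <;> simp [h, hd, hadj]
  rw [Finset.sum_congr rfl fun a _ => h1 a]
  rw [← Finset.sum_subtype A (fun x => Iff.rfl)
    (fun v => if v ∈ D ∧ G.Adj v b then (1 : ZMod 2) else 0)]
  rw [Finset.sum_boole]
  congr 2
  ext v
  simp only [Finset.mem_filter]
  constructor
  · rintro ⟨-, hv, hadj⟩; exact ⟨hv, hadj.symm⟩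
  · rintro ⟨hv, hadj⟩; exact ⟨hD hv, hv, hadj.symm⟩

lemma cutrk_ne_card_iff (G : SimpleGraph V) (A : Finset V) :
    cutrk G A ≠ A.card ↔
      ∃ D : Finset V, D.Nonempty ∧ D ⊆ A ∧ oddNbhd G D ⊆ A := by
  set M : Matrix {x // x ∈ A} {x // x ∈ Aᶜ} (ZMod 2) :=
    Matrix.of fun a b => if G.Adj a.1 b.1 then (1 : ZMod 2) else 0 with hM
  have heq : cutrk G A = A.card ↔ LinearIndependent (ZMod 2) M.row := by
    rw [cutrk, ← hM, Matrix.rank_eq_finrank_span_row,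
      linearIndependent_iff_card_eq_finrank_span, Set.finrank, Fintype.card_coe]
    exact eq_comm
  rw [Ne, heq, Fintype.not_linearIndependent_iff]
  constructor
  · rintro ⟨g, hsum, i, hi⟩
    set D : Finset V := A.filter (fun v => ∃ h : v ∈ A, g ⟨v, h⟩ = 1) with hDdef
    have hDA : D ⊆ A := Finset.filter_subset _ _
    have hg : ∀ a : {x // x ∈ A}, g a = 1 ↔ a.1 ∈ D := by
      intro a
      simp only [hDdef, Finset.mem_filter]
      constructor
      · intro h; exact ⟨a.2, a.2, h⟩
      · rintro ⟨-, h, h1⟩; exact h1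
    refine ⟨D, ?_, hDA, ?_⟩
    · have : g i = 1 := (zmod2_cases (g i)).resolve_left hi
      exact ⟨i.1, (hg i).1 this⟩
    · intro b hb
      by_contra hbA
      have hodd : Odd ((D.filter (G.Adj b)).card) := by
        simpa [oddNbhd] using hb
      have hcol := congrFun hsum ⟨b, Finset.mem_compl.2 hbA⟩
      rw [Finset.sum_apply] at hcol
      have : ∑ a : {x // x ∈ A}, g a * (if G.Adj a.1 b then 1 else 0) = 0 := by
        simpa [hM, smul_eq_mul] using hcol
      rw [colsum G A D hDA g hg b] at this
      obtain ⟨k, hk⟩ := hodd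
      have h2 : ((2 * k + 1 : ℕ) : ZMod 2) = 1 := by
        push_cast
        rw [show (2 : ZMod 2) = 0 by decide]
        ring
      rw [hk, h2] at this
      exact one_ne_zero this

  · rintro ⟨D, ⟨d, hd⟩, hDA, hodd⟩
    refine ⟨fun a => if a.1 ∈ D then 1 else 0, ?_, ⟨d, hDA hd⟩, by simp [hd]⟩
    funext b
    rw [Finset.sum_apply]
    have hcol := colsum G A D hDA (fun a => if a.1 ∈ D then 1 else 0)
      (fun a => by by_cases h : a.1 ∈ D <;> simp [h]) b.1
    have heven : Even ((D.filter (G.Adj b.1)).card) := by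
      rw [← Nat.not_odd_iff_even]
      intro h
      have hmem : b.1 ∈ oddNbhd G D := by simp [oddNbhd, h]
      exact (Finset.mem_compl.1 b.2) (hodd hmem)
    obtain ⟨k, hk⟩ := heven
    simp only [Pi.zero_apply, Pi.smul_apply, smul_eq_mul, hM, Matrix.row_apply, Matrix.of_apply]
    rw [hcol, hk]
    have hcast : ((k + k : ℕ) : ZMod 2) = 0 := by
      have h3 : ((k + k : ℕ) : ZMod 2) = (k : ZMod 2) + k := by push_cast; ring
      rw [h3, ← two_mul, show (2 : ZMod 2) = 0 by decide, zero_mul]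
    exact hcast

lemma localSet_witness {G : SimpleGraph V} {A : Finset V} (h : IsLocalSet G A) :
    ∃ D : Finset V, D.Nonempty ∧ D ⊆ A ∧ oddNbhd G D ⊆ A := by
  obtain ⟨hne, D, rfl⟩ := h
  refine ⟨D, ?_, Finset.subset_union_left, Finset.subset_union_right⟩
  rcases D.eq_empty_or_nonempty with rfl | h
  · simp [oddNbhd_empty] at hne
  · exact h

theorem isMLS_iff_cutrk (G : SimpleGraph V) (A : Finset V) :
    IsMLS G A ↔ (cutrk G A ≠ A.card ∧ ∀ B ⊂ A, cutrk G B = B.card) := by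
  constructor
  · rintro ⟨hA, hmin⟩
    refine ⟨(cutrk_ne_card_iff G A).2 (localSet_witness hA), fun B hB => ?_⟩
    by_contra hne
    obtain ⟨D, hDne, hDB, hoddB⟩ := (cutrk_ne_card_iff G B).1 hne
    exact hmin (D ∪ oddNbhd G D)
      (lt_of_le_of_lt (Finset.union_subset hDB hoddB) hB)
      ⟨hDne.mono Finset.subset_union_left, D, rfl⟩
  · rintro ⟨hA, hsub⟩
    obtain ⟨D, hDne, hDA, hodd⟩ := (cutrk_ne_card_iff G A).1 hA
    have hBA : D ∪ oddNbhd G D ⊆ A := Finset.union_subset hDA hodd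
    have hBloc : IsLocalSet G (D ∪ oddNbhd G D) :=
      ⟨hDne.mono Finset.subset_union_left, D, rfl⟩
    have hBeqA : D ∪ oddNbhd G D = A := by
      by_contra h
      exact (cutrk_ne_card_iff G _).2
        ⟨D, hDne, Finset.subset_union_left, Finset.subset_union_right⟩
        (hsub _ (hBA.ssubset_of_ne h))
    refine ⟨hBeqA ▸ hBloc, fun C hC hCloc => ?_⟩
    obtain ⟨E, hEne, hEC, hoddC⟩ := localSet_witness hCloc
    exact (cutrk_ne_card_iff G C).2 ⟨E, hEne, hEC, hoddC⟩ (hsub C hC)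
end

section
/- The cut-rank function of a finite simple graph is submodular: for all A, B ⊆ V, cutrk(A ∪ B) + cutrk(A ∩ B) ≤ cutrk(A) + cutrk(B). -/
open Finset
open scoped Classical symmDiff

variable {V : Type*} [Fintype V] [DecidableEq V]

section Aux

variable (G : SimpleGraph V)

private noncomputable def rowV (a : V) : V → ZMod 2 := fun v => if G.Adj a v then 1 else 0

private noncomputable def sing (a : V) : V → ZMod 2 := Pi.single a 1

private noncomputable def UU (A : Finset V) : Submodule (ZMod 2) (V → ZMod 2) :=
  Submodule.span (ZMod 2) ((rowV G '' ↑A) ∪ (sing '' ↑A))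

private noncomputable def proj (A : Finset V) :
    (V → ZMod 2) →ₗ[ZMod 2] ({x // x ∈ Aᶜ} → ZMod 2) :=
  LinearMap.funLeft (ZMod 2) (ZMod 2) Subtype.val

private lemma ker_proj (A : Finset V) :
    LinearMap.ker (proj (V := V) A) = Submodule.span (ZMod 2) (sing '' (↑A : Set V)) := by
  apply le_antisymm
  · intro f hf
    have hf' : ∀ v, v ∉ A → f v = 0 := by
      intro v hv
      have := congrFun (LinearMap.mem_ker.mp hf) ⟨v, by simpa using hv⟩
      simpa [proj, LinearMap.funLeft_apply] using this
    have : f = ∑ a ∈ A, f a • sing a := by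
      funext v
      rw [Finset.sum_apply]
      have : ∀ a ∈ A, (f a • sing a) v = if v = a then f a else 0 := by
        intro a _
        by_cases h : v = a
        · subst h; simp [sing]
        · simp [sing, h, Pi.single_eq_of_ne h]
      rw [Finset.sum_congr rfl this, Finset.sum_ite_eq A v f]
      by_cases hv : v ∈ A
      · simp [hv]
      · simp [hv, hf' v hv]
    rw [this]
    exact Submodule.sum_mem _ fun a ha => Submodule.smul_mem _ _
      (Submodule.subset_span ⟨a, ha, rfl⟩)
  · rw [Submodule.span_le]
    rintro _ ⟨a, ha, rfl⟩
    simp only [SetLike.mem_coe, LinearMap.mem_ker]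
    funext b
    have hb : b.1 ≠ a := by
      intro h
      have := b.2
      rw [h] at this
      simp [Finset.mem_compl] at this
      exact this ha
    simp [proj, LinearMap.funLeft_apply, sing, Pi.single_eq_of_ne hb]

private lemma finrank_span_sing (A : Finset V) :
    Module.finrank (ZMod 2) (Submodule.span (ZMod 2) (sing '' (↑A : Set V))) = A.card := by
  haveI : Fact (Nat.Prime 2) := ⟨by norm_num⟩
  have hrn := LinearMap.finrank_range_add_finrank_ker (proj (V := V) A)
  have hsurj : Function.Surjective (proj (V := V) A) :=
    LinearMap.funLeft_surjective_of_injective _ _ _ Subtype.val_injective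
  have hrange : LinearMap.range (proj (V := V) A) = ⊤ := LinearMap.range_eq_top.mpr hsurj
  rw [hrange, ker_proj] at hrn
  have h1 : Module.finrank (ZMod 2) (⊤ : Submodule (ZMod 2) ({x // x ∈ Aᶜ} → ZMod 2))
      = (Aᶜ : Finset V).card := by
    rw [finrank_top, Module.finrank_pi]
    exact Fintype.card_coe Aᶜ
  have h2 : Module.finrank (ZMod 2) (V → ZMod 2) = Fintype.card V := Module.finrank_pi _
  rw [h1, h2] at hrn
  have hc : (Aᶜ : Finset V).card = Fintype.card V - A.card := Finset.card_compl A
  have hle : A.card ≤ Fintype.card V := Finset.card_le_univ A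
  omega

set_option maxHeartbeats 1000000 in
set_option synthInstance.maxHeartbeats 400000 in
private lemma cutrk_add_card (A : Finset V) :
    cutrk G A + A.card = Module.finrank (ZMod 2) (UU G A) := by
  haveI : Fact (Nat.Prime 2) := ⟨by norm_num⟩
  set π := proj (V := V) A
  -- cut rank equals rank of the row span
  have hrows : cutrk G A
      = Module.finrank (ZMod 2) (Submodule.map π (Submodule.span (ZMod 2) (rowV G '' ↑A))) := by
    rw [cutrk, ← Matrix.rank_transpose, Matrix.rank_eq_finrank_span_cols,
      Matrix.col_transpose, Matrix.row, Submodule.map_span]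
    have hset : Submodule.span (ZMod 2) (Set.range (Matrix.of fun (a : {x // x ∈ A}) (b : {x // x ∈ Aᶜ}) =>
        if G.Adj a.1 b.1 then (1 : ZMod 2) else 0))
        = Submodule.span (ZMod 2) (⇑π '' (rowV G '' ↑A)) := by
      have : Set.range (Matrix.of fun (a : {x // x ∈ A}) (b : {x // x ∈ Aᶜ}) =>
          if G.Adj a.1 b.1 then (1 : ZMod 2) else 0) = ⇑π '' (rowV G '' ↑A) := by
        ext f
        constructor
        · rintro ⟨a, rfl⟩
          exact ⟨rowV G a.1, ⟨a.1, a.2, rfl⟩,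
            by funext b; simp [π, proj, LinearMap.funLeft_apply, rowV]⟩
        · rintro ⟨_, ⟨a, ha, rfl⟩, rfl⟩
          exact ⟨⟨a, ha⟩, by funext b; simp [π, proj, LinearMap.funLeft_apply, rowV]⟩
      rw [this]
    rw [hset]
  -- the projection of UU equals the projection of the row span
  have hmap : Submodule.map π (UU G A)
      = Submodule.map π (Submodule.span (ZMod 2) (rowV G '' ↑A)) := by
    rw [UU, Submodule.span_union, Submodule.map_sup]
    have : Submodule.map π (Submodule.span (ZMod 2) (sing '' (↑A : Set V))) = ⊥ := by
      rw [← ker_proj, eq_bot_iff]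
      rintro x hx
      obtain ⟨y, hy, rfl⟩ := Submodule.mem_map.mp hx
      simpa [Submodule.mem_bot] using LinearMap.mem_ker.mp hy
    rw [this, sup_bot_eq]
  -- rank-nullity for π restricted to UU
  have hker_le : LinearMap.ker π ≤ UU G A := by
    rw [ker_proj, UU]
    exact Submodule.span_mono Set.subset_union_right
  have hrn := LinearMap.finrank_range_add_finrank_ker (π.domRestrict (UU G A))
  rw [LinearMap.range_domRestrict, LinearMap.ker_domRestrict] at hrn
  have hkereq : Module.finrank (ZMod 2) (Submodule.comap (UU G A).subtype (LinearMap.ker π))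
      = A.card := by
    rw [(Submodule.comapSubtypeEquivOfLe hker_le).finrank_eq]
    rw [show LinearMap.ker π = Submodule.span (ZMod 2) (sing '' (↑A : Set V)) from ker_proj A]
    exact finrank_span_sing A
  rw [hkereq, hmap, ← hrows] at hrn
  exact hrn

end Aux

theorem cutrk_submodular (G : SimpleGraph V) (A B : Finset V) :
    cutrk G (A ∪ B) + cutrk G (A ∩ B) ≤ cutrk G A + cutrk G B := by
  haveI : Fact (Nat.Prime 2) := ⟨by norm_num⟩
  have hU : UU G (A ∪ B) = UU G A ⊔ UU G B := by
    rw [UU, UU, UU, ← Submodule.span_union]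
    congr 1
    rw [Finset.coe_union, Set.image_union, Set.image_union]
    ext x
    simp only [Set.mem_union]
    tauto
  have hI : UU G (A ∩ B) ≤ UU G A ⊓ UU G B := by
    refine le_inf ?_ ?_ <;>
    · apply Submodule.span_mono
      apply Set.union_subset_union <;> apply Set.image_mono <;> intro x hx <;>
        simp at hx ⊢ <;> tauto
  have hmod := Submodule.finrank_sup_add_finrank_inf_eq (UU G A) (UU G B)
  have hle : Module.finrank (ZMod 2) (UU G (A ∩ B))
      ≤ Module.finrank (ZMod 2) (UU G A ⊓ UU G B : Submodule (ZMod 2) (V → ZMod 2)) :=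
    Submodule.finrank_mono hI
  have h1 := cutrk_add_card G (A ∪ B)
  have h2 := cutrk_add_card G (A ∩ B)
  have h3 := cutrk_add_card G A
  have h4 := cutrk_add_card G B
  have hcard : (A ∪ B).card + (A ∩ B).card = A.card + B.card :=
    Finset.card_union_add_card_inter A B
  rw [hU] at h1
  omega
end

section
/- For any A ⊆ V with cutrk(A) = r, there exists a chain of subsets B₀ ⊊ B₁ ⊊ … ⊊ B_{|A|−r} = A with |B_i| = r + i and cutrk(B_i) ≥ r for each i; in particular B₀ is a full-cut-rank subset of A of size cutrk(A). -/
open Finset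
open scoped Classical symmDiff

variable {V : Type*} [Fintype V] [DecidableEq V]

/-- the row of vertex `a` with columns restricted to `C` -/
noncomputable def grow (G : SimpleGraph V) (C : Finset V) (a : V) : V → ZMod 2 :=
  fun v => if v ∈ C ∧ G.Adj a v then 1 else 0

noncomputable def rk2 (G : SimpleGraph V) (S C : Finset V) : ℕ :=
  Module.finrank (ZMod 2) (Submodule.span (ZMod 2) (grow G C '' ↑S))

noncomputable def projC (C : Finset V) : (V → ZMod 2) →ₗ[ZMod 2] (V → ZMod 2) where
  toFun f v := if v ∈ C then f v else 0
  map_add' f g := by funext v; by_cases h : v ∈ C <;> simp [h]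
  map_smul' c f := by funext v; by_cases h : v ∈ C <;> simp [h]

lemma cutrk_eq_rk2 (G : SimpleGraph V) (S : Finset V) : cutrk G S = rk2 G S Sᶜ := by
  classical
  set M := (Matrix.of fun (a : {x // x ∈ S}) (b : {x // x ∈ Sᶜ}) =>
    if G.Adj a.1 b.1 then (1 : ZMod 2) else 0) with hM
  have h1 : cutrk G S = Module.finrank (ZMod 2)
      (Submodule.span (ZMod 2) (Set.range fun a : {x // x ∈ S} => M a)) := by
    have := Matrix.rank_transpose M
    rw [cutrk, ← this, Matrix.rank_eq_finrank_span_cols]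
    rfl
  set e := Function.ExtendByZero.linearMap (ZMod 2) ((↑) : {x // x ∈ Sᶜ} → V) with he
  have hinj : Function.Injective e := by
    intro f g h
    funext b
    have hf := congrFun h (b : V)
    rwa [he, Function.ExtendByZero.linearMap_apply, Function.ExtendByZero.linearMap_apply,
      Subtype.val_injective.extend_apply, Subtype.val_injective.extend_apply] at hf
  have hrow : ∀ a : {x // x ∈ S}, e (M a) = grow G Sᶜ a.1 := by
    intro a
    funext v
    by_cases hv : v ∈ Sᶜ
    · have : e (M a) v = M a ⟨v, hv⟩ := by
        have := Subtype.val_injective.extend_apply (M a) (0 : V → ZMod 2) ⟨v, hv⟩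
        simpa [he] using this
      rw [this]; simp [grow, hv, hM]
    · have : e (M a) v = 0 := by
        rw [he, Function.ExtendByZero.linearMap_apply, Function.extend_apply']
        · rfl
        · rintro ⟨b, rfl⟩; exact hv b.2
      simp [this, grow, hv]
  have himg : e '' (Set.range fun a : {x // x ∈ S} => M a) = grow G Sᶜ '' ↑S := by
    rw [← Set.range_comp]
    have : (e ∘ fun a : {x // x ∈ S} => M a) = (fun a : {x // x ∈ S} => grow G Sᶜ a.1) := by
      funext a; exact hrow a
    rw [this]
    ext x
    simp [Set.mem_image, Set.mem_range, Subtype.exists]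
  have h2 : Submodule.map e (Submodule.span (ZMod 2) (Set.range fun a : {x // x ∈ S} => M a)) =
      Submodule.span (ZMod 2) (grow G Sᶜ '' ↑S) := by
    rw [Submodule.map_span, himg]
  rw [h1, rk2, ← h2]
  exact LinearEquiv.finrank_eq (Submodule.equivMapOfInjective e hinj
    (Submodule.span (ZMod 2) (Set.range fun a : {x // x ∈ S} => M a)))

lemma rk2_le_card (G : SimpleGraph V) (S C : Finset V) : rk2 G S C ≤ S.card := by
  classical
  have h : grow G C '' ↑S = ((S.image (grow G C) : Finset (V → ZMod 2)) : Set (V → ZMod 2)) := by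
    simp [Finset.coe_image]
  rw [rk2, h]
  exact (finrank_span_finset_le_card _).trans (Finset.card_image_le)

lemma cutrk_le_card (G : SimpleGraph V) (S : Finset V) : cutrk G S ≤ S.card :=
  (cutrk_eq_rk2 G S) ▸ rk2_le_card G S Sᶜ

lemma rk2_mono_rows (G : SimpleGraph V) {S S' : Finset V} (C : Finset V) (h : S ⊆ S') :
    rk2 G S C ≤ rk2 G S' C :=
  Submodule.finrank_mono (Submodule.span_mono (Set.image_mono h))

lemma rk2_mono_cols (G : SimpleGraph V) (S : Finset V) {C C' : Finset V} (h : C ⊆ C') :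
    rk2 G S C ≤ rk2 G S C' := by
  classical
  have key : ∀ a : V, projC C (grow G C' a) = grow G C a := by
    intro a; funext v
    by_cases hv : v ∈ C
    · simp [projC, grow, hv, h hv]
    · simp [projC, grow, hv]
  have h1 : Submodule.map (projC C) (Submodule.span (ZMod 2) (grow G C' '' ↑S)) =
      Submodule.span (ZMod 2) (grow G C '' ↑S) := by
    rw [Submodule.map_span, ← Set.image_comp]
    congr 1
    exact Set.image_congr fun a _ => key a
  rw [rk2, ← h1]
  exact Submodule.finrank_map_le _ _

theorem exists_full_cutrk_chain (G : SimpleGraph V) (A : Finset V) :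
    ∃ B : ℕ → Finset V,
      B (A.card - cutrk G A) = A ∧
      (∀ i ≤ A.card - cutrk G A, (B i).card = cutrk G A + i ∧ cutrk G A ≤ cutrk G (B i)) ∧
      (∀ i < A.card - cutrk G A, B i ⊂ B (i + 1)) ∧
      B 0 ⊆ A ∧ cutrk G (B 0) = (B 0).card ∧ (B 0).card = cutrk G A := by
  classical
  rcases isEmpty_or_nonempty V with hV | hV
  · have hA : A = ∅ := Finset.eq_empty_of_isEmpty A
    have h0 : cutrk G A = 0 := Nat.le_zero.1 ((cutrk_le_card G A).trans (by simp [hA]))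
    refine ⟨fun _ => ∅, by simp [hA, h0], ?_, by simp [hA, h0], by simp [hA], ?_, ?_⟩
    · intro i hi
      simp [hA, h0] at hi
      simp [hi, h0]
    · have := cutrk_le_card G (∅ : Finset V)
      simpa using Nat.le_zero.1 (by simpa using this)
    · simp [h0]
  set r := cutrk G A with hr
  have hrA : r = rk2 G A Aᶜ := cutrk_eq_rk2 G A
  have hrle : r ≤ A.card := cutrk_le_card G A
  -- find a linearly independent spanning subset of the rows
  obtain ⟨t, hts, htspan, htli⟩ :=
    exists_linearIndependent (ZMod 2) (grow G Aᶜ '' (↑A : Set V))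
  have htfin : t.Finite := (((A : Set V).toFinite.image _).subset hts)
  haveI : Fintype t := htfin.fintype
  have htcard : t.toFinset.card = r := by
    rw [hrA, rk2, ← htspan]
    exact (finrank_span_set_eq_card htli).symm
  -- choose preimages
  have hchoice : ∀ x ∈ t, ∃ a ∈ A, grow G Aᶜ a = x := by
    intro x hx
    obtain ⟨a, ha, rfl⟩ := hts hx
    exact ⟨a, ha, rfl⟩
  set pick : (V → ZMod 2) → V := fun x =>
    if h : ∃ a ∈ A, grow G Aᶜ a = x then h.choose else Classical.arbitrary V with hpick
  have hpick_mem : ∀ x ∈ t, pick x ∈ A := by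
    intro x hx
    have h := hchoice x hx
    simp only [hpick, dif_pos h]
    exact h.choose_spec.1
  have hpick_eq : ∀ x ∈ t, grow G Aᶜ (pick x) = x := by
    intro x hx
    have h := hchoice x hx
    simp only [hpick, dif_pos h]
    exact h.choose_spec.2
  set T : Finset V := t.toFinset.image pick with hT
  have hTA : T ⊆ A := by
    intro a ha
    rw [hT] at ha
    obtain ⟨x, hx, rfl⟩ := Finset.mem_image.1 ha
    exact hpick_mem x (Set.mem_toFinset.1 hx)
  have hTcard : T.card = r := by
    rw [hT, Finset.card_image_of_injOn, htcard]
    intro x hx y hy hxy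
    rw [← hpick_eq x (Set.mem_toFinset.1 hx), ← hpick_eq y (Set.mem_toFinset.1 hy), hxy]
  have hTimg : grow G Aᶜ '' ↑T = t := by
    ext x
    constructor
    · rintro ⟨a, ha, rfl⟩
      rw [hT, Finset.coe_image] at ha
      obtain ⟨y, hy, rfl⟩ := ha
      rw [hpick_eq y (by simpa using hy)]
      simpa using hy
    · intro hx
      exact ⟨pick x, by rw [hT]; exact Finset.mem_coe.2 (Finset.mem_image_of_mem _
        (Set.mem_toFinset.2 hx)), hpick_eq x hx⟩
  have hTrk : rk2 G T Aᶜ = r := by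
    rw [rk2, hTimg, htspan, ← rk2, ← hrA]
  -- enumerate A \ T
  set L : List V := (A \ T).toList with hL
  have hLnd : L.Nodup := Finset.nodup_toList _
  have hLlen : L.length = A.card - r := by
    rw [hL, Finset.length_toList, Finset.card_sdiff_of_subset hTA, hTcard]
  set k := A.card - r with hk
  set B : ℕ → Finset V := fun i => T ∪ (L.take i).toFinset with hB
  have hBsub : ∀ i, B i ⊆ A := by
    intro i a ha
    rcases Finset.mem_union.1 ha with h | h
    · exact hTA h
    · have : a ∈ L.toFinset := List.mem_toFinset.2 (List.take_subset _ _ (List.mem_toFinset.1 h))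
      rw [hL, Finset.toList_toFinset] at this
      exact (Finset.mem_sdiff.1 this).1
  have hdisj : ∀ i, Disjoint T (L.take i).toFinset := by
    intro i
    rw [Finset.disjoint_right]
    intro a ha
    have : a ∈ L.toFinset := List.mem_toFinset.2 (List.take_subset _ _ (List.mem_toFinset.1 ha))
    rw [hL, Finset.toList_toFinset] at this
    exact (Finset.mem_sdiff.1 this).2
  have hBcard : ∀ i ≤ k, (B i).card = r + i := by
    intro i hi
    show (T ∪ (L.take i).toFinset).card = r + i
    rw [Finset.card_union_of_disjoint (hdisj i), hTcard,
      List.toFinset_card_of_nodup (hLnd.sublist (List.take_sublist _ _)),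
      List.length_take, hLlen, min_eq_left hi]
  have hBrk : ∀ i, r ≤ cutrk G (B i) := by
    intro i
    rw [cutrk_eq_rk2]
    calc r = rk2 G T Aᶜ := hTrk.symm
      _ ≤ rk2 G (B i) Aᶜ := rk2_mono_rows G _ Finset.subset_union_left
      _ ≤ rk2 G (B i) (B i)ᶜ := rk2_mono_cols G _ (Finset.compl_subset_compl.2 (hBsub i))
  have hBk : B k = A := by
    show T ∪ (L.take k).toFinset = A
    have h3 : L.take k = L := List.take_of_length_le (by rw [hLlen])
    rw [h3, hL, Finset.toList_toFinset, Finset.union_sdiff_of_subset hTA]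
  have hB0 : B 0 = T := by simp [hB]
  refine ⟨B, hBk, fun i hi => ⟨hBcard i hi, hBrk i⟩, fun i hi => ?_, ?_, ?_, ?_⟩
  · have hsub : L.take i ⊆ L.take (i + 1) := by
      have h4 := List.take_subset i (L.take (i + 1))
      rwa [List.take_take, min_eq_left (Nat.le_succ i)] at h4
    refine Finset.ssubset_iff_subset_ne.2 ⟨Finset.union_subset_union_right
      (fun a ha => List.mem_toFinset.2 (hsub (List.mem_toFinset.1 ha))), ?_⟩
    intro h
    have h1 := hBcard i (le_of_lt hi)
    have h2 := hBcard (i + 1) hi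
    rw [h] at h1
    omega
  · rw [hB0]; exact hTA
  · rw [hB0, hTcard, ← hTrk]
    have h1 : cutrk G T ≤ T.card := cutrk_le_card G T
    have h2 := hBrk 0
    rw [hB0] at h2
    omega
  · rw [hB0, hTcard]
end

section
/- Let V be a finite set and μ : 2^V → ℕ satisfy symmetry (μ(V∖A)=μ(A)), linear boundedness (μ(A) ≤ |A|), and submodularity (μ(A∪B)+μ(A∩B) ≤ μ(A)+μ(B)). Call A a μ-minimal local set if μ(A) ≤ |A|−1 and μ(B)=|B| for every proper subset B ⊊ A. Then every element of V is contained in some μ-minimal local set. -/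
open Finset

private lemma mu_chain {V : Type*} [Fintype V] [DecidableEq V] (μ : Finset V → ℕ)
    (hsub : ∀ A B : Finset V, μ (A ∪ B) + μ (A ∩ B) ≤ μ A + μ B)
    (S : Finset V) (hS : μ S = S.card) :
    ∀ R : Finset V, Disjoint S R → (∀ y ∈ R, μ (insert y S) ≤ S.card) →
      μ (S ∪ R) ≤ S.card := by
  intro R
  induction R using Finset.induction_on with
  | empty => intro _ _; simp [hS]
  | @insert y R hyR ih =>
    intro hdisj hall
    have hyS : y ∉ S := by
      intro hy
      exact (Finset.disjoint_left.mp hdisj hy) (Finset.mem_insert_self y R)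
    have hdisj' : Disjoint S R := hdisj.mono_right (Finset.subset_insert y R)
    have ihR : μ (S ∪ R) ≤ S.card :=
      ih hdisj' (fun z hz => hall z (Finset.mem_insert_of_mem hz))
    have hy' : μ (insert y S) ≤ S.card := hall y (Finset.mem_insert_self y R)
    have hU : (S ∪ R) ∪ insert y S = S ∪ insert y R := by
      ext z
      simp only [Finset.mem_union, Finset.mem_insert]
      tauto
    have hI : (S ∪ R) ∩ insert y S = S := by
      ext z
      simp only [Finset.mem_inter, Finset.mem_union, Finset.mem_insert]
      constructor
      · rintro ⟨h1, h2⟩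
        rcases h2 with rfl | hzS
        · rcases h1 with hzS | hzR
          · exact hzS
          · exact absurd hzR hyR
        · exact hzS
      · intro hzS
        exact ⟨Or.inl hzS, Or.inr hzS⟩
    have := hsub (S ∪ R) (insert y S)
    rw [hU, hI] at this
    omega

theorem mu_MLS_cover {V : Type*} [Fintype V] [DecidableEq V] (μ : Finset V → ℕ)
    (hsymm : ∀ A : Finset V, μ Aᶜ = μ A)
    (hbound : ∀ A : Finset V, μ A ≤ A.card)
    (hsub : ∀ A B : Finset V, μ (A ∪ B) + μ (A ∩ B) ≤ μ A + μ B) :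
    ∀ a : V, ∃ A : Finset V, a ∈ A ∧ μ A + 1 ≤ A.card ∧ ∀ B ⊂ A, μ B = B.card := by
  intro a
  by_contra hcon
  push_neg at hcon
  -- hcon : ∀ A, a ∈ A → μ A + 1 ≤ A.card → ∃ B ⊂ A, μ B ≠ B.card
  have hempty : μ (∅ : Finset V) = 0 := by
    have := hbound (∅ : Finset V); simpa using this
  -- Key: adding a to an exact set avoiding a stays exact
  have key : ∀ S : Finset V, a ∉ S → μ S = S.card → μ (insert a S) = S.card + 1 := by
    intro S haS hS
    by_contra hne
    have hcard : (insert a S).card = S.card + 1 := Finset.card_insert_of_notMem haS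
    have hloc : μ (insert a S) + 1 ≤ (insert a S).card := by
      have := hbound (insert a S); omega
    -- take a minimal (by card) local subset D of insert a S
    set famD := (insert a S).powerset.filter (fun X => μ X + 1 ≤ X.card) with hfamD
    have hne' : famD.Nonempty := ⟨insert a S, by
      simp only [hfamD, Finset.mem_filter, Finset.mem_powerset]
      exact ⟨Finset.Subset.refl _, hloc⟩⟩
    obtain ⟨D, hDmem, hDmin⟩ := famD.exists_min_image Finset.card hne'
    simp only [hfamD, Finset.mem_filter, Finset.mem_powerset] at hDmem
    obtain ⟨hDsub, hDloc⟩ := hDmem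
    -- proper subsets of D are exact
    have hproper : ∀ B ⊂ D, μ B = B.card := by
      intro B hB
      by_contra hBne
      have hBloc : μ B + 1 ≤ B.card := by
        have := hbound B; omega
      have hBmem : B ∈ famD := by
        simp only [hfamD, Finset.mem_filter, Finset.mem_powerset]
        exact ⟨hB.subset.trans hDsub, hBloc⟩
      have := hDmin B hBmem
      have := Finset.card_lt_card hB
      omega
    -- a ∈ D
    have haD : a ∈ D := by
      by_contra haD
      have hDS : D ⊆ S := by
        intro z hz
        rcases Finset.mem_insert.mp (hDsub hz) with rfl | hzS
        · exact absurd hz haD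
        · exact hzS
      -- monotonicity: μ S + D.card ≤ μ D + S.card
      have hUc : D ∪ (S \ D) = S := Finset.union_sdiff_of_subset hDS
      have hIc : D ∩ (S \ D) = ∅ := by
        ext z
        simp only [Finset.mem_inter, Finset.mem_sdiff, Finset.notMem_empty, iff_false]
        tauto
      have hcards : D.card + (S \ D).card = S.card := by
        have := Finset.card_sdiff_of_subset hDS
        have := Finset.card_le_card hDS
        omega
      have h1 := hsub D (S \ D)
      rw [hUc, hIc] at h1
      have h2 := hbound (S \ D)
      omega
    obtain ⟨B, hBD, hBne⟩ := hcon D haD hDloc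
    exact hBne (hproper B hBD)
  -- maximum exact set avoiding a
  set famS := (Finset.univ : Finset (Finset V)).filter (fun S => a ∉ S ∧ μ S = S.card)
    with hfamS
  have hSne : famS.Nonempty := ⟨∅, by
    simp only [hfamS, Finset.mem_filter, Finset.mem_univ, true_and]
    exact ⟨Finset.notMem_empty a, by simpa using hempty⟩⟩
  obtain ⟨Sm, hSmem, hSmax⟩ := famS.exists_max_image Finset.card hSne
  simp only [hfamS, Finset.mem_filter, Finset.mem_univ, true_and] at hSmem
  obtain ⟨haSm, hSmex⟩ := hSmem
  set T := insert a Sm with hT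
  have hTex : μ T = T.card := by
    rw [hT, Finset.card_insert_of_notMem haSm]
    exact key Sm haSm hSmex
  -- maximum exact subset of Tᶜ
  set famQ := Tᶜ.powerset.filter (fun S => μ S = S.card) with hfamQ
  have hQne : famQ.Nonempty := ⟨∅, by
    simp only [hfamQ, Finset.mem_filter, Finset.mem_powerset]
    exact ⟨Finset.empty_subset _, by simpa using hempty⟩⟩
  obtain ⟨S1, hS1mem, hS1max⟩ := famQ.exists_max_image Finset.card hQne
  simp only [hfamQ, Finset.mem_filter, Finset.mem_powerset] at hS1mem
  obtain ⟨hS1sub, hS1ex⟩ := hS1mem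
  -- every y in Tᶜ \ S1 : insert y S1 not exact
  have hstep : ∀ y ∈ Tᶜ \ S1, μ (insert y S1) ≤ S1.card := by
    intro y hy
    obtain ⟨hyT, hyS1⟩ := Finset.mem_sdiff.mp hy
    have hins : insert y S1 ⊆ Tᶜ := Finset.insert_subset hyT hS1sub
    have hcard : (insert y S1).card = S1.card + 1 := Finset.card_insert_of_notMem hyS1
    by_contra hgt
    have hex : μ (insert y S1) = (insert y S1).card := by
      have := hbound (insert y S1); omega
    have hmem : insert y S1 ∈ famQ := by
      simp only [hfamQ, Finset.mem_filter, Finset.mem_powerset]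
      exact ⟨hins, hex⟩
    have := hS1max _ hmem
    omega
  have hdisj : Disjoint S1 (Tᶜ \ S1) := Finset.disjoint_sdiff
  have hchain := mu_chain μ hsub S1 hS1ex (Tᶜ \ S1) hdisj hstep
  rw [Finset.union_sdiff_of_subset hS1sub] at hchain
  -- μ Tᶜ = μ T = T.card = Sm.card + 1
  have hsymmT := hsymm T
  have hTcard : T.card = Sm.card + 1 := by
    rw [hT, Finset.card_insert_of_notMem haSm]
  -- S1 avoids a and is exact, so S1.card ≤ Sm.card
  have haS1 : a ∉ S1 := by
    intro ha
    have : a ∈ Tᶜ := hS1sub ha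
    rw [Finset.mem_compl] at this
    exact this (by rw [hT]; exact Finset.mem_insert_self a Sm)
  have hS1inS : S1 ∈ famS := by
    simp only [hfamS, Finset.mem_filter, Finset.mem_univ, true_and]
    exact ⟨haS1, hS1ex⟩
  have := hSmax S1 hS1inS
  omega
end

section
/- In a finite simple graph of order n, every minimal local set A satisfies |A| ≤ n/2 if n ≡ 0 (mod 4), and |A| ≤ ⌊n/2⌋ + 1 otherwise. -/
open Finset
open scoped Classical symmDiff

variable {V : Type*} [Fintype V] [DecidableEq V]

set_option linter.unusedSectionVars false

/-! ### Auxiliary development -/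

lemma zmod2_ne_zero_iff (a : ZMod 2) : a ≠ 0 ↔ a = 1 := by revert a; decide

/-- The "odd neighborhood sum" of an `F₂`-vector. -/
noncomputable def nSum (G : SimpleGraph V) (x : V → ZMod 2) (v : V) : ZMod 2 :=
  ∑ u, if G.Adj v u then x u else 0

lemma nSum_add (G : SimpleGraph V) (x y : V → ZMod 2) (v : V) :
    nSum G (x + y) v = nSum G x v + nSum G y v := by
  simp only [nSum, ← Finset.sum_add_distrib]
  refine Finset.sum_congr rfl fun u _ => ?_
  by_cases h : G.Adj v u <;> simp [h]

lemma nSum_smul (G : SimpleGraph V) (c : ZMod 2) (x : V → ZMod 2) (v : V) :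
    nSum G (c • x) v = c * nSum G x v := by
  simp only [nSum, Finset.mul_sum]
  refine Finset.sum_congr rfl fun u _ => ?_
  by_cases h : G.Adj v u <;> simp [h]

/-- The support of an `F₂`-vector, as a finset. -/
noncomputable def suppF (x : V → ZMod 2) : Finset V :=
  Finset.univ.filter fun v => x v = 1

lemma mem_suppF {x : V → ZMod 2} {v : V} : v ∈ suppF x ↔ x v = 1 := by
  simp [suppF]

lemma nSum_eq_card (G : SimpleGraph V) (x : V → ZMod 2) (v : V) :
    nSum G x v = (((suppF x).filter (G.Adj v)).card : ZMod 2) := by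
  have key : ∀ u, (if G.Adj v u then x u else 0) =
      if u ∈ (suppF x).filter (G.Adj v) then (1 : ZMod 2) else 0 := by
    intro u
    rcases (show ∀ a : ZMod 2, a = 0 ∨ a = 1 by decide) (x u) with h | h <;>
      by_cases ha : G.Adj v u <;>
      simp [Finset.mem_filter, mem_suppF, h, ha]
  rw [nSum, Finset.sum_congr rfl (fun u _ => key u)]
  rw [Finset.sum_ite_mem, Finset.univ_inter, Finset.sum_const, nsmul_eq_mul, mul_one]

lemma nSum_zero_iff (G : SimpleGraph V) (x : V → ZMod 2) (v : V) :
    nSum G x v = 0 ↔ ¬ Odd (((suppF x).filter (G.Adj v)).card) := by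
  rw [nSum_eq_card, ZMod.natCast_eq_zero_iff, Nat.odd_iff]
  omega

/-- The space of `F₂`-vectors supported in `A` whose odd-neighborhood avoids `Aᶜ`. -/
noncomputable def locKer (G : SimpleGraph V) (A : Finset V) :
    Submodule (ZMod 2) (V → ZMod 2) where
  carrier := {x | (∀ v, x v ≠ 0 → v ∈ A) ∧ ∀ v, v ∉ A → nSum G x v = 0}
  add_mem' := by
    rintro x y ⟨hx1, hx2⟩ ⟨hy1, hy2⟩
    constructor
    · intro v hv
      by_contra hvA
      have h1 : x v = 0 := by by_contra h; exact hvA (hx1 v h)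
      have h2 : y v = 0 := by by_contra h; exact hvA (hy1 v h)
      exact hv (by simp [h1, h2])
    · intro v hv
      rw [nSum_add, hx2 v hv, hy2 v hv, add_zero]
  zero_mem' := by
    constructor
    · intro v hv; simp at hv
    · intro v _; simp [nSum]
  smul_mem' := by
    rintro c x ⟨hx1, hx2⟩
    constructor
    · intro v hv
      apply hx1 v
      intro h
      exact hv (by simp [h])
    · intro v hv
      rw [nSum_smul, hx2 v hv, mul_zero]

lemma mem_locKer {G : SimpleGraph V} {A : Finset V} {x : V → ZMod 2} :
    x ∈ locKer G A ↔ (∀ v, x v ≠ 0 → v ∈ A) ∧ ∀ v, v ∉ A → nSum G x v = 0 :=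
  Iff.rfl

/-- A nonzero element of `locKer G A` yields a local set inside `A`. -/
lemma localSet_of_locKer {G : SimpleGraph V} {A : Finset V} {x : V → ZMod 2}
    (hx : x ∈ locKer G A) (hx0 : x ≠ 0) :
    IsLocalSet G (suppF x ∪ oddNbhd G (suppF x)) ∧
      suppF x ∪ oddNbhd G (suppF x) ⊆ A := by
  obtain ⟨hsupp, hker⟩ := hx
  have hD : suppF x ⊆ A := by
    intro v hv
    exact hsupp v (by rw [mem_suppF] at hv; rw [hv]; exact one_ne_zero)
  have hO : oddNbhd G (suppF x) ⊆ A := by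
    intro v hv
    by_contra hvA
    have := hker v hvA
    rw [nSum_zero_iff] at this
    simp only [oddNbhd, Finset.mem_filter] at hv
    exact this hv.2
  refine ⟨⟨?_, suppF x, rfl⟩, Finset.union_subset hD hO⟩
  obtain ⟨v, hv⟩ := Function.ne_iff.mp hx0
  exact ⟨v, Finset.mem_union_left _ (mem_suppF.mpr ((zmod2_ne_zero_iff _).mp hv))⟩

/-- A local set yields a nonzero element of `locKer`. -/
lemma locKer_of_localSet {G : SimpleGraph V} {A : Finset V} (hA : IsLocalSet G A) :
    ∃ x ∈ locKer G A, x ≠ 0 := by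
  obtain ⟨hne, D, hD⟩ := hA
  set x : V → ZMod 2 := fun v => if v ∈ D then 1 else 0 with hxdef
  have hsx : suppF x = D := by
    ext v; simp only [mem_suppF, hxdef]
    by_cases h : v ∈ D <;> simp [h]
  have hDne : D.Nonempty := by
    rcases Finset.eq_empty_or_nonempty D with h | h
    · exfalso
      have : oddNbhd G D = ∅ := by
        ext v; simp [oddNbhd, h, Nat.odd_iff]
      rw [this, h] at hD
      simp only [Finset.empty_union] at hD
      exact Finset.not_nonempty_empty (hD ▸ hne)
    · exact h
  refine ⟨x, ⟨?_, ?_⟩, ?_⟩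
  · intro v hv
    have hvD : v ∈ D := by
      by_contra h; exact hv (by simp [hxdef, h])
    rw [hD]; exact Finset.mem_union_left _ hvD
  · intro v hv
    rw [nSum_zero_iff, hsx]
    intro hodd
    apply hv
    rw [hD]
    exact Finset.mem_union_right _ (by simp [oddNbhd, hodd])
  · obtain ⟨d, hd⟩ := hDne
    intro h
    have := congrFun h d
    simp [hxdef, hd] at this

/-- In a minimal local set, any nonzero kernel element generates the whole set. -/
lemma locKer_gen_eq {G : SimpleGraph V} {A : Finset V} (hA : IsMLS G A)
    {x : V → ZMod 2} (hx : x ∈ locKer G A) (hx0 : x ≠ 0) :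
    suppF x ∪ oddNbhd G (suppF x) = A := by
  obtain ⟨hloc, hsub⟩ := localSet_of_locKer hx hx0
  by_contra hne
  exact hA.2 _ (Finset.ssubset_iff_subset_ne.mpr ⟨hsub, hne⟩) hloc

/-- Lower bound: `|A| ≤ |Aᶜ| + dim (locKer G A)`. -/
lemma card_le_of_locKer (G : SimpleGraph V) (A : Finset V) :
    A.card ≤ Aᶜ.card + Module.finrank (ZMod 2) (locKer G A) := by
  -- the cut matrix from `Aᶜ` to `A`
  set M : Matrix {b : V // b ∈ Aᶜ} {a : V // a ∈ A} (ZMod 2) :=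
    fun b a => if G.Adj b.1 a.1 then 1 else 0 with hM
  set T := M.mulVecLin with hT
  -- extension by zero
  set Ψ : ({a : V // a ∈ A} → ZMod 2) →ₗ[ZMod 2] (V → ZMod 2) :=
    { toFun := fun y v => if h : v ∈ A then y ⟨v, h⟩ else 0
      map_add' := by
        intro y z; funext v; by_cases h : v ∈ A <;> simp [h]
      map_smul' := by
        intro c y; funext v; by_cases h : v ∈ A <;> simp [h] } with hΨ
  -- kernel elements of T land in locKer
  have hland : ∀ y ∈ LinearMap.ker T, Ψ y ∈ locKer G A := by
    intro y hy
    rw [LinearMap.mem_ker] at hy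
    constructor
    · intro v hv
      by_contra h
      simp [hΨ, h] at hv
    · intro v hv
      have hvc : v ∈ Aᶜ := Finset.mem_compl.mpr hv
      have hTy : (∑ a : {a : V // a ∈ A}, (if G.Adj v a.1 then 1 else 0) * y a) = 0 := by
        have := congrFun hy ⟨v, hvc⟩
        rw [hT, Matrix.mulVecLin_apply] at this
        exact this
      have step1 : (∑ u : V, if G.Adj v u then Ψ y u else 0) =
          ∑ u ∈ A, (if G.Adj v u then Ψ y u else 0) :=
        (Finset.sum_subset (Finset.subset_univ A) (fun u _ hu => by simp [hΨ, hu])).symm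
      rw [nSum, step1,
        ← Finset.sum_attach A (fun u => if G.Adj v u then Ψ y u else 0)]
      refine Eq.trans ?_ hTy
      rw [← Finset.univ_eq_attach]
      refine Finset.sum_congr rfl fun a _ => ?_
      have ha : (a : V) ∈ A := a.2
      by_cases hadj : G.Adj v a.1 <;> simp [hΨ, hadj, ha]
  -- the induced injective map
  set e : LinearMap.ker T →ₗ[ZMod 2] locKer G A :=
    LinearMap.codRestrict _ (Ψ.comp (Submodule.subtype _)) (fun y => hland y.1 y.2) with he
  have hinj : Function.Injective e := by
    intro y z h
    ext a
    have := congrFun (congrArg Subtype.val h) a.1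
    simpa [he, hΨ, a.2] using this
  have h1 : Module.finrank (ZMod 2) (LinearMap.ker T) ≤
      Module.finrank (ZMod 2) (locKer G A) :=
    LinearMap.finrank_le_finrank_of_injective hinj
  have h2 := LinearMap.finrank_range_add_finrank_ker T
  rw [Module.finrank_fintype_fun_eq_card, Fintype.card_coe] at h2
  have h3 : Module.finrank (ZMod 2) (LinearMap.range T) ≤ Aᶜ.card := by
    have := Submodule.finrank_le (LinearMap.range T)
    rwa [Module.finrank_fintype_fun_eq_card, Fintype.card_coe] at this
  omega

lemma coe_ne_zero_of_ne_zero {G : SimpleGraph V} {A : Finset V} {x : locKer G A}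
    (hx : x ≠ 0) : (x : V → ZMod 2) ≠ 0 := by
  intro h
  exact hx (Subtype.ext h)

lemma mem_of_gen {G : SimpleGraph V} {A : Finset V} (hA : IsMLS G A)
    {x : V → ZMod 2} (hx : x ∈ locKer G A) (hx0 : x ≠ 0) {v : V} (hv : v ∈ A) :
    x v = 1 ∨ nSum G x v ≠ 0 := by
  have hgen := locKer_gen_eq hA hx hx0
  rw [← hgen] at hv
  rcases Finset.mem_union.mp hv with h | h
  · exact Or.inl (mem_suppF.mp h)
  · right
    rw [Ne, nSum_zero_iff]
    simp only [oddNbhd, Finset.mem_filter] at h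
    exact not_not.mpr h.2

/-- Upper bound: the kernel of a minimal local set has dimension at most 2. -/
lemma finrank_locKer_le_two {G : SimpleGraph V} {A : Finset V} (hA : IsMLS G A) :
    Module.finrank (ZMod 2) (locKer G A) ≤ 2 := by
  obtain ⟨v0, hv0⟩ := hA.1.1
  set φ : locKer G A →ₗ[ZMod 2] (Fin 2 → ZMod 2) :=
    { toFun := fun x => ![(x : V → ZMod 2) v0, nSum G (x : V → ZMod 2) v0]
      map_add' := by
        intro x y; funext i; fin_cases i <;> simp [nSum_add]
      map_smul' := by
        intro c x; funext i; fin_cases i <;> simp [nSum_smul] } with hφ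
  have hinj : Function.Injective φ := by
    rw [← LinearMap.ker_eq_bot, Submodule.eq_bot_iff]
    intro x hx
    by_contra hx0
    rw [LinearMap.mem_ker] at hx
    have h0 := congrFun hx 0
    have h1 := congrFun hx 1
    simp only [hφ, LinearMap.coe_mk, AddHom.coe_mk] at h0 h1
    rcases mem_of_gen hA x.2 (coe_ne_zero_of_ne_zero hx0) hv0 with h | h
    · rw [show ((![(x : V → ZMod 2) v0, nSum G (x : V → ZMod 2) v0] : Fin 2 → ZMod 2) 0)
        = (x : V → ZMod 2) v0 from rfl] at h0
      rw [h] at h0; exact one_ne_zero h0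
    · exact h (by simpa using h1)
  have := LinearMap.finrank_le_finrank_of_injective hinj
  rwa [Module.finrank_fintype_fun_eq_card, Fintype.card_fin] at this

lemma zmod2_det_helper : ∀ a1 b1 a2 b2 : ZMod 2, a1 * b2 + a2 * b1 = 0 →
    ∃ c1 c2 : ZMod 2, ¬(c1 = 0 ∧ c2 = 0) ∧ c1 * a1 + c2 * a2 = 0 ∧
      c1 * b1 + c2 * b2 = 0 := by decide

lemma sum_mul_nSum_comm (G : SimpleGraph V) (x y : V → ZMod 2) :
    ∑ v, x v * nSum G y v = ∑ v, y v * nSum G x v := by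
  have key : ∀ x y : V → ZMod 2, ∑ v, x v * nSum G y v =
      ∑ v, ∑ u, (if G.Adj v u then x v * y u else 0) := by
    intro x y
    refine Finset.sum_congr rfl fun v _ => ?_
    rw [nSum, Finset.mul_sum]
    refine Finset.sum_congr rfl fun u _ => ?_
    by_cases h : G.Adj v u <;> simp [h]
  rw [key, key, Finset.sum_comm]
  refine Finset.sum_congr rfl fun v _ => Finset.sum_congr rfl fun u _ => ?_
  rw [G.adj_comm, mul_comm]

/-- Parity: a minimal local set whose kernel has dimension 2 has even size. -/
lemma even_card_of_finrank_two {G : SimpleGraph V} {A : Finset V} (hA : IsMLS G A)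
    (h2 : Module.finrank (ZMod 2) (locKer G A) = 2) : Even A.card := by
  have b := Module.finBasisOfFinrankEq (ZMod 2) (locKer G A) h2
  set x1 : V → ZMod 2 := ((b 0 : locKer G A) : V → ZMod 2) with hx1
  set x2 : V → ZMod 2 := ((b 1 : locKer G A) : V → ZMod 2) with hx2
  have hindep : ∀ c1 c2 : ZMod 2, c1 • b 0 + c2 • b 1 = 0 → c1 = 0 ∧ c2 = 0 := by
    intro c1 c2 h
    have hli := Fintype.linearIndependent_iff.mp b.linearIndependent ![c1, c2]
    have hs : ∑ i : Fin 2, (![c1, c2] : Fin 2 → ZMod 2) i • b i = 0 := by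
      rw [Fin.sum_univ_two]; simpa using h
    exact ⟨by simpa using hli hs 0, by simpa using hli hs 1⟩
  -- the local determinant is 1 at each vertex of A
  have hdet : ∀ v ∈ A, x1 v * nSum G x2 v + x2 v * nSum G x1 v = 1 := by
    intro v hv
    rcases (show ∀ a : ZMod 2, a = 0 ∨ a = 1 by decide)
      (x1 v * nSum G x2 v + x2 v * nSum G x1 v) with h | h
    swap; · exact h
    exfalso
    obtain ⟨c1, c2, hc, hcv, hcs⟩ := zmod2_det_helper (x1 v) (nSum G x1 v)
      (x2 v) (nSum G x2 v) h
    set z : locKer G A := c1 • b 0 + c2 • b 1 with hz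
    have hz0 : z ≠ 0 := by
      intro h0
      exact hc (hindep c1 c2 (hz ▸ h0))
    have hzc : (z : V → ZMod 2) = c1 • x1 + c2 • x2 := by
      simp [hz, hx1, hx2]
    have hzv : (z : V → ZMod 2) v = 0 := by
      rw [hzc]; simpa [smul_eq_mul] using hcv
    have hzs : nSum G (z : V → ZMod 2) v = 0 := by
      rw [hzc]
      have : nSum G (c1 • x1 + c2 • x2) v =
          c1 * nSum G x1 v + c2 * nSum G x2 v := by
        rw [nSum_add, nSum_smul, nSum_smul]
      rw [this]; exact hcs
    rcases mem_of_gen hA z.2 (coe_ne_zero_of_ne_zero hz0) hv with h' | h'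
    · rw [hzv] at h'; exact zero_ne_one h'
    · exact h' hzs
  -- sum the determinants over A
  have hsum : ((A.card : ZMod 2)) = 0 := by
    have e1 : ((A.card : ZMod 2)) = ∑ v ∈ A, (1 : ZMod 2) := by
      rw [Finset.sum_const, nsmul_eq_mul, mul_one]
    have e2 : ∑ v ∈ A, (1 : ZMod 2) =
        ∑ v ∈ A, (x1 v * nSum G x2 v + x2 v * nSum G x1 v) :=
      Finset.sum_congr rfl fun v hv => (hdet v hv).symm
    have e3 : ∑ v ∈ A, (x1 v * nSum G x2 v + x2 v * nSum G x1 v) =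
        ∑ v, (x1 v * nSum G x2 v + x2 v * nSum G x1 v) := by
      refine Finset.sum_subset (Finset.subset_univ A) fun v _ hv => ?_
      have h1 : x1 v = 0 := by
        by_contra h; exact hv ((b 0 : locKer G A).2.1 v h)
      have h2 : x2 v = 0 := by
        by_contra h; exact hv ((b 1 : locKer G A).2.1 v h)
      rw [h1, h2]; ring
    rw [e1, e2, e3, Finset.sum_add_distrib, sum_mul_nSum_comm]
    exact CharTwo.add_self_eq_zero _
  rw [ZMod.natCast_eq_zero_iff] at hsum
  obtain ⟨k, hk⟩ := hsum
  exact ⟨k, by omega⟩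

theorem MLS_size_bound (G : SimpleGraph V) (A : Finset V) (hA : IsMLS G A) :
    (Fintype.card V % 4 = 0 → A.card ≤ Fintype.card V / 2) ∧
      (Fintype.card V % 4 ≠ 0 → A.card ≤ Fintype.card V / 2 + 1) := by
  obtain ⟨v0, hv0⟩ := hA.1.1
  set n := Fintype.card V with hn
  -- the kernel of any proper subset is trivial
  have hBker : locKer G (A.erase v0) = ⊥ := by
    rw [Submodule.eq_bot_iff]
    intro x hx
    by_contra hx0
    obtain ⟨hloc, hsub⟩ := localSet_of_locKer hx hx0
    exact hA.2 _ (Finset.ssubset_of_subset_of_ssubset hsub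
      (Finset.erase_ssubset hv0)) hloc
  -- general bound : 2|A| ≤ n + 2
  have hgen : 2 * A.card ≤ n + 2 := by
    have h := card_le_of_locKer G (A.erase v0)
    rw [hBker] at h
    rw [finrank_bot] at h
    have hcc : (A.erase v0)ᶜ.card = n - (A.erase v0).card := Finset.card_compl _
    have hce : (A.erase v0).card = A.card - 1 := Finset.card_erase_of_mem hv0
    have hAn : A.card ≤ n := Finset.card_le_univ A
    have hA1 : 1 ≤ A.card := Finset.card_pos.mpr ⟨v0, hv0⟩
    omega
  refine ⟨?_, fun _ => by omega⟩
  intro h4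
  by_contra hgt
  push_neg at hgt
  have hcard : A.card = n / 2 + 1 := by omega
  have h := card_le_of_locKer G A
  rw [Finset.card_compl] at h
  have hAn : A.card ≤ n := Finset.card_le_univ A
  have hd2 : Module.finrank (ZMod 2) (locKer G A) = 2 := by
    have := finrank_locKer_le_two hA
    omega
  obtain ⟨k, hk⟩ := even_card_of_finrank_two hA hd2
  omega
end

section
/- A minimal local set L of a finite simple graph has either exactly one generator or exactly three generators; in the latter case the three generators are of the form D₀, D₁, and D₀ △ D₁, and |L| is even. Equivalently, |L| − cutrk(L) ∈ {1,2}, and |L| − cutrk(L) = 2 implies |L| is even. -/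
open Finset
open scoped Classical symmDiff

set_option linter.unusedSectionVars false
set_option maxHeartbeats 1000000

variable {V : Type*} [Fintype V] [DecidableEq V]

namespace MLSaux

open Matrix

/-! ### Basic facts about `oddNbhd` and `ZMod 2` -/

lemma mem_oddNbhd (G : SimpleGraph V) {D : Finset V} {v : V} :
    v ∈ oddNbhd G D ↔ Odd ((D.filter (G.Adj v)).card) := by
  simp [oddNbhd]

lemma oddNbhd_empty (G : SimpleGraph V) : oddNbhd G ∅ = ∅ := by
  simp [oddNbhd]

lemma filter_symmDiff' (p : V → Prop) [DecidablePred p] (A B : Finset V) :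
    (A ∆ B).filter p = A.filter p ∆ B.filter p := by
  ext v
  simp only [Finset.mem_filter, Finset.mem_symmDiff]
  tauto

lemma odd_card_symmDiff (A B : Finset V) :
    Odd ((A ∆ B).card) ↔ ¬ (Odd A.card ↔ Odd B.card) := by
  have h1 : (A ∆ B) = (A \ B) ∪ (B \ A) := by
    rw [symmDiff_def]; rfl
  have h2 : Disjoint (A \ B) (B \ A) := disjoint_sdiff_sdiff
  have h3 : (A ∆ B).card = (A \ B).card + (B \ A).card := by
    rw [h1, Finset.card_union_of_disjoint h2]
  have h4 := Finset.card_sdiff_add_card_inter A B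
  have h5 := Finset.card_sdiff_add_card_inter B A
  have h6 : (A ∩ B).card = (B ∩ A).card := by rw [Finset.inter_comm]
  simp only [Nat.odd_iff] at *
  omega

/-- Linearity of the odd neighborhood. -/
lemma oddNbhd_symmDiff (G : SimpleGraph V) (A B : Finset V) :
    oddNbhd G (A ∆ B) = oddNbhd G A ∆ oddNbhd G B := by
  ext v
  rw [Finset.mem_symmDiff]
  simp only [mem_oddNbhd, filter_symmDiff', odd_card_symmDiff]
  tauto

lemma zmod2_cases (z : ZMod 2) : z = 0 ∨ z = 1 := by
  fin_cases z
  · exact Or.inl rfl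
  · exact Or.inr rfl

lemma cast_card_eq_zero_iff (n : ℕ) : (n : ZMod 2) = 0 ↔ Even n := by
  rw [ZMod.natCast_eq_zero_iff, Nat.even_iff, Nat.dvd_iff_mod_eq_zero]

lemma cast_card_odd {n : ℕ} (h : Odd n) : (n : ZMod 2) = 1 := by
  rw [Nat.odd_iff] at h
  conv_lhs => rw [← Nat.div_add_mod n 2, h]
  push_cast
  have h2 : (2 : ZMod 2) = 0 := rfl
  rw [h2]
  ring

lemma cast_card_even {n : ℕ} (h : Even n) : (n : ZMod 2) = 0 :=
  (cast_card_eq_zero_iff n).2 h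

/-- Handshake: the number of vertices of `D` with an odd number of neighbors
inside `D` is even. -/
lemma even_card_inter_oddNbhd (G : SimpleGraph V) (D : Finset V) :
    Even ((D ∩ oddNbhd G D).card) := by
  rw [← cast_card_eq_zero_iff]
  have h1 : (D ∩ oddNbhd G D) = D.filter (fun v => v ∈ oddNbhd G D) := by
    ext v; simp [Finset.mem_filter, Finset.mem_inter]
  have h2 : ((D ∩ oddNbhd G D).card : ZMod 2)
      = ∑ v ∈ D, (if v ∈ oddNbhd G D then (1 : ZMod 2) else 0) := by
    rw [h1, Finset.card_filter]
    push_cast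
    rfl
  have h3 : ∀ v, (if v ∈ oddNbhd G D then (1 : ZMod 2) else 0)
      = ((D.filter (G.Adj v)).card : ZMod 2) := by
    intro v
    by_cases hv : v ∈ oddNbhd G D
    · rw [if_pos hv, cast_card_odd ((mem_oddNbhd G).1 hv)]
    · rw [if_neg hv, cast_card_even (Nat.not_odd_iff_even.1 ((mem_oddNbhd G).not.1 hv))]
  have h4 : ∀ v, ((D.filter (G.Adj v)).card : ZMod 2)
      = ∑ w ∈ D, (if G.Adj v w then (1 : ZMod 2) else 0) := by
    intro v
    rw [Finset.card_filter]
    push_cast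
    rfl
  rw [h2]
  simp_rw [h3, h4]
  rw [← Finset.sum_product' (s := D) (t := D)
    (f := fun v w => if G.Adj v w then (1 : ZMod 2) else 0)]
  refine Finset.sum_involution (fun a _ => Prod.swap a) ?_ ?_ ?_ ?_
  · intro a ha
    rcases a with ⟨v, w⟩
    have : G.Adj w v ↔ G.Adj v w := G.adj_comm w v
    by_cases h : G.Adj v w <;> simp [Prod.swap, this, h]
    decide
  · intro a ha hne
    rcases a with ⟨v, w⟩
    intro hc
    apply hne
    have hvw : v = w := ((Prod.ext_iff).1 hc).2
    subst hvw
    simp [G.irrefl]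
  · intro a ha
    rcases Finset.mem_product.1 ha with ⟨h1, h2⟩
    exact Finset.mem_product.2 ⟨h2, h1⟩
  · intro a ha; simp

/-! ### Generators of a minimal local set -/

lemma three_pigeon {a₀ b₀ a₁ b₁ a₂ b₂ : Prop}
    (m0 : a₀ ∨ b₀) (m1 : a₁ ∨ b₁) (m2 : a₂ ∨ b₂)
    (k01 : ¬((a₀ ↔ a₁) ∧ (b₀ ↔ b₁)))
    (k02 : ¬((a₀ ↔ a₂) ∧ (b₀ ↔ b₂)))
    (k12 : ¬((a₁ ↔ a₂) ∧ (b₁ ↔ b₂))) :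
    (a₀ ∧ b₀) ∨ (a₁ ∧ b₁) ∨ (a₂ ∧ b₂) := by
  by_cases h0 : a₀ <;> by_cases h1 : b₀ <;> by_cases h2 : a₁ <;> by_cases h3 : b₁ <;>
    by_cases h4 : a₂ <;> by_cases h5 : b₂ <;> simp_all

variable {G : SimpleGraph V} {L : Finset V}

/-- Any nonempty `D` with `D ∪ Odd(D) ⊆ L` generates `L`, when `L` is an MLS. -/
lemma sub_gen (hL : IsMLS G L) {D : Finset V} (hsub : D ∪ oddNbhd G D ⊆ L)
    (hne : D.Nonempty) : D ∪ oddNbhd G D = L := by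
  by_contra h
  exact hL.2 _ (Finset.ssubset_iff_subset_ne.2 ⟨hsub, h⟩)
    ⟨hne.mono Finset.subset_union_left, ⟨D, rfl⟩⟩

lemma gen_symmDiff (hL : IsMLS G L) {A B : Finset V}
    (hA : A ∪ oddNbhd G A = L) (hB : B ∪ oddNbhd G B = L) (hne : A ≠ B) :
    (A ∆ B) ∪ oddNbhd G (A ∆ B) = L := by
  apply sub_gen hL
  · rw [oddNbhd_symmDiff]
    intro v hv
    rw [Finset.mem_union, Finset.mem_symmDiff, Finset.mem_symmDiff] at hv
    have hA' : v ∈ A ∨ v ∈ oddNbhd G A → v ∈ L := by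
      intro h; rw [← hA]; exact Finset.mem_union.2 h
    have hB' : v ∈ B ∨ v ∈ oddNbhd G B → v ∈ L := by
      intro h; rw [← hB]; exact Finset.mem_union.2 h
    tauto
  · rw [Finset.nonempty_iff_ne_empty]
    intro h
    exact hne (symmDiff_eq_bot.1 h)

lemma empty_not_gen (hL : IsMLS G L) : ¬(∅ ∪ oddNbhd G ∅ = (L : Finset V)) := by
  rw [oddNbhd_empty, Finset.union_empty]
  exact fun h => hL.1.1.ne_empty h.symm

/-- Injectivity of `D ↦ (v ∈ D, v ∈ Odd D)` on generators. -/
lemma gen_inj (hL : IsMLS G L) {A B : Finset V} {v : V}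
    (hA : A ∪ oddNbhd G A = L) (hB : B ∪ oddNbhd G B = L) (hv : v ∈ L)
    (h1 : v ∈ A ↔ v ∈ B) (h2 : v ∈ oddNbhd G A ↔ v ∈ oddNbhd G B) : A = B := by
  by_contra hne
  have hg := gen_symmDiff hL hA hB hne
  have hv' : v ∈ (A ∆ B) ∪ oddNbhd G (A ∆ B) := hg.symm ▸ hv
  rw [oddNbhd_symmDiff, Finset.mem_union, Finset.mem_symmDiff, Finset.mem_symmDiff] at hv'
  tauto

/-- The set of generators of `L`. -/
noncomputable def Gen (G : SimpleGraph V) (L : Finset V) : Finset (Finset V) :=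
  Finset.univ.powerset.filter fun D : Finset V => D ∪ oddNbhd G D = L

lemma mem_gen {D : Finset V} : D ∈ Gen G L ↔ D ∪ oddNbhd G D = L := by
  simp [Gen, Finset.mem_filter, Finset.mem_powerset]

lemma gen_card_le_three (hL : IsMLS G L) : (Gen G L).card ≤ 3 := by
  obtain ⟨v, hv⟩ := hL.1.1
  refine le_trans (Finset.card_le_card_of_injOn
    (fun D : Finset V => ((v ∈ D : Bool), (v ∈ oddNbhd G D : Bool)))
    (t := ({(true, true), (true, false), (false, true)} : Finset (Bool × Bool))) ?_ ?_)
    (by decide)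
  · intro D hD
    rw [Finset.mem_coe, mem_gen] at hD
    have : v ∈ D ∨ v ∈ oddNbhd G D := Finset.mem_union.1 (hD.symm ▸ hv)
    simp only [Finset.mem_coe, Finset.mem_insert, Finset.mem_singleton, Prod.mk.injEq]
    by_cases h1 : v ∈ D <;> by_cases h2 : v ∈ oddNbhd G D <;> simp_all
  · intro A hA B hB hEq
    simp only [Finset.mem_coe, mem_gen] at hA hB
    rw [Prod.mk.injEq] at hEq
    exact gen_inj hL hA hB hv (by simpa using hEq.1) (by simpa using hEq.2)

/-- Main combinatorial lemma: a minimal local set has one or three generators,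
and in the latter case they are `D₀`, `D₁`, `D₀ ∆ D₁`, and `|L|` is even. -/
lemma gen_main (hL : IsMLS G L) :
    (Gen G L).card = 1 ∨ ((Gen G L).card = 3 ∧
      (∃ D₀ D₁ : Finset V, D₀ ≠ D₁ ∧ Gen G L = {D₀, D₁, D₀ ∆ D₁}) ∧ Even L.card) := by
  have hne : (Gen G L).Nonempty := by
    obtain ⟨D, hD⟩ := hL.1.2
    exact ⟨D, mem_gen.2 hD.symm⟩
  have hnot2 : (Gen G L).card ≠ 2 := by
    intro h2
    obtain ⟨A, B, hAB, hG⟩ := Finset.card_eq_two.1 h2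
    have hA : A ∈ Gen G L := by rw [hG]; simp
    have hB : B ∈ Gen G L := by rw [hG]; simp
    have hS : A ∆ B ∈ Gen G L := mem_gen.2 (gen_symmDiff hL (mem_gen.1 hA) (mem_gen.1 hB) hAB)
    rw [hG, Finset.mem_insert, Finset.mem_singleton] at hS
    rcases hS with h | h
    · have hB0 : B = ∅ := by simpa using symmDiff_eq_left.1 h
      exact empty_not_gen hL (hB0 ▸ mem_gen.1 hB)
    · have hA0 : A = ∅ := by simpa using symmDiff_eq_right.1 h
      exact empty_not_gen hL (hA0 ▸ mem_gen.1 hA)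
  have h13 : (Gen G L).card = 1 ∨ (Gen G L).card = 3 := by
    have h1 := Finset.card_pos.2 hne
    have h3 := gen_card_le_three hL
    omega
  rcases h13 with h1 | h3
  · exact Or.inl h1
  refine Or.inr ⟨h3, ?_, ?_⟩
  · -- exhibit the three generators
    obtain ⟨D₀, h₀, D₁, h₁, hne01⟩ := Finset.one_lt_card.1 (by omega : 1 < (Gen G L).card)
    refine ⟨D₀, D₁, hne01, ?_⟩
    have h₂ : D₀ ∆ D₁ ∈ Gen G L :=
      mem_gen.2 (gen_symmDiff hL (mem_gen.1 h₀) (mem_gen.1 h₁) hne01)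
    have hne02 : D₀ ∆ D₁ ≠ D₀ := by
      intro h
      have h10 : D₁ = ∅ := by simpa using symmDiff_eq_left.1 h
      exact empty_not_gen hL (h10 ▸ mem_gen.1 h₁)
    have hne12 : D₀ ∆ D₁ ≠ D₁ := by
      intro h
      have h00 : D₀ = ∅ := by simpa using symmDiff_eq_right.1 h
      exact empty_not_gen hL (h00 ▸ mem_gen.1 h₀)
    have hsub : ({D₀, D₁, D₀ ∆ D₁} : Finset (Finset V)) ⊆ Gen G L := by
      intro X hX
      simp only [Finset.mem_insert, Finset.mem_singleton] at hX
      rcases hX with rfl | rfl | rfl <;> assumption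
    have hcard : ({D₀, D₁, D₀ ∆ D₁} : Finset (Finset V)).card = 3 := by
      rw [Finset.card_insert_of_notMem (by simp [hne01, Ne.symm hne02]),
        Finset.card_insert_of_notMem (by simp [Ne.symm hne12])]
      rfl
    exact (Finset.eq_of_subset_of_card_le hsub (by omega)).symm
  · -- evenness
    obtain ⟨D₀, h₀, D₁, h₁, hne01⟩ := Finset.one_lt_card.1 (by omega : 1 < (Gen G L).card)
    have h₂ : D₀ ∆ D₁ ∈ Gen G L :=
      mem_gen.2 (gen_symmDiff hL (mem_gen.1 h₀) (mem_gen.1 h₁) hne01)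
    set D₂ := D₀ ∆ D₁ with hD₂
    have hne02 : D₀ ≠ D₂ := by
      intro h
      have h10 : D₁ = ∅ := by simpa using symmDiff_eq_left.1 h.symm
      exact empty_not_gen hL (h10 ▸ mem_gen.1 h₁)
    have hne12 : D₁ ≠ D₂ := by
      intro h
      have h00 : D₀ = ∅ := by simpa using symmDiff_eq_right.1 h.symm
      exact empty_not_gen hL (h00 ▸ mem_gen.1 h₀)
    set A₀ := D₀ ∩ oddNbhd G D₀ with hA₀
    set A₁ := D₁ ∩ oddNbhd G D₁ with hA₁
    set A₂ := D₂ ∩ oddNbhd G D₂ with hA₂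
    have hsub : ∀ {D : Finset V}, D ∈ Gen G L → D ∩ oddNbhd G D ⊆ L := by
      intro D hD
      exact (Finset.inter_subset_left).trans
        ((Finset.subset_union_left).trans (le_of_eq (mem_gen.1 hD)))
    have key : ∀ {A B : Finset V} {v : V}, A ∈ Gen G L → B ∈ Gen G L → A ≠ B → v ∈ L →
        ¬((v ∈ A ↔ v ∈ B) ∧ (v ∈ oddNbhd G A ↔ v ∈ oddNbhd G B)) := by
      intro A B v hA hB hne hv hc
      exact hne (gen_inj hL (mem_gen.1 hA) (mem_gen.1 hB) hv hc.1 hc.2)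
    have hmem : ∀ {D : Finset V} {v : V}, D ∈ Gen G L → v ∈ L →
        v ∈ D ∨ v ∈ oddNbhd G D := by
      intro D v hD hv
      exact Finset.mem_union.1 ((mem_gen.1 hD).symm ▸ hv)
    have hcover : L ⊆ A₀ ∪ (A₁ ∪ A₂) := by
      intro v hv
      have k01 := key h₀ h₁ hne01 hv
      have k02 := key h₀ h₂ hne02 hv
      have k12 := key h₁ h₂ hne12 hv
      have m0 := hmem h₀ hv
      have m1 := hmem h₁ hv
      have m2 := hmem h₂ hv
      simp only [Finset.mem_union, hA₀, hA₁, hA₂, Finset.mem_inter]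
      exact three_pigeon m0 m1 m2 k01 k02 k12
    have hsup : A₀ ∪ (A₁ ∪ A₂) ⊆ L :=
      Finset.union_subset (hsub h₀) (Finset.union_subset (hsub h₁) (hsub h₂))
    have hdisj : ∀ {A B : Finset V}, A ∈ Gen G L → B ∈ Gen G L → A ≠ B →
        Disjoint (A ∩ oddNbhd G A) (B ∩ oddNbhd G B) := by
      intro A B hA hB hne
      rw [Finset.disjoint_left]
      intro v hvA hvB
      rw [Finset.mem_inter] at hvA hvB
      have hv : v ∈ L := hsub hA (Finset.mem_inter.2 hvA)
      exact key hA hB hne hv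
        ⟨⟨fun _ => hvB.1, fun _ => hvA.1⟩, ⟨fun _ => hvB.2, fun _ => hvA.2⟩⟩
    have hLeq : L = A₀ ∪ (A₁ ∪ A₂) := le_antisymm hcover hsup
    have hcard : L.card = A₀.card + (A₁.card + A₂.card) := by
      rw [hLeq, Finset.card_union_of_disjoint, Finset.card_union_of_disjoint]
      · exact hdisj h₁ h₂ hne12
      · exact Finset.disjoint_union_right.2 ⟨hdisj h₀ h₁ hne01, hdisj h₀ h₂ hne02⟩
    rw [hcard]
    exact Even.add (even_card_inter_oddNbhd G D₀)
      (Even.add (even_card_inter_oddNbhd G D₁) (even_card_inter_oddNbhd G D₂))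

/-! ### The cut-rank computation -/

noncomputable def cutM (G : SimpleGraph V) (L : Finset V) :
    Matrix {x // x ∈ L} {x // x ∈ Lᶜ} (ZMod 2) :=
  Matrix.of fun a b => if G.Adj a.1 b.1 then (1 : ZMod 2) else 0

noncomputable def kdim (G : SimpleGraph V) (L : Finset V) : ℕ :=
  Module.finrank (ZMod 2) (LinearMap.ker ((cutM G L)ᵀ.mulVecLin))

lemma cutrk_eq (G : SimpleGraph V) (L : Finset V) : cutrk G L = (cutM G L).rank := rfl

lemma rank_add (G : SimpleGraph V) (L : Finset V) :
    cutrk G L + kdim G L = L.card := by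
  rw [cutrk_eq, ← Matrix.rank_transpose]
  have h := LinearMap.finrank_range_add_finrank_ker ((cutM G L)ᵀ.mulVecLin)
  rw [Module.finrank_fintype_fun_eq_card, Fintype.card_coe] at h
  exact h

/-- Helper: the kernel sum equals the casted count of neighbours in `D`. -/
lemma sum_indicator (G : SimpleGraph V) (L : Finset V) (w : V) (D : Finset V) (hD : D ⊆ L)
    (x : {y // y ∈ L} → ZMod 2) (hx : ∀ a : {y // y ∈ L}, (a.1 ∈ D ↔ x a = 1)) :
    ∑ a : {y // y ∈ L}, (if G.Adj a.1 w then (1 : ZMod 2) else 0) * x a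
      = ((D.filter (G.Adj w)).card : ZMod 2) := by
  have step1 : ∀ a : {y // y ∈ L}, (if G.Adj a.1 w then (1 : ZMod 2) else 0) * x a
      = (fun v => if v ∈ D ∧ G.Adj w v then (1 : ZMod 2) else 0) a.1 := by
    intro a
    by_cases hadj : G.Adj a.1 w
    · have hadj' : G.Adj w a.1 := hadj.symm
      rcases zmod2_cases (x a) with h | h
      · have hnot : a.1 ∉ D := fun hmem => by
          rw [(hx a).1 hmem] at h; exact one_ne_zero h
        simp [hadj, hadj', h, hnot]
      · have hmem : a.1 ∈ D := (hx a).2 h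
        simp [hadj, hadj', h, hmem]
    · have hadj' : ¬ G.Adj w a.1 := fun h => hadj h.symm
      simp [hadj, hadj']
  rw [Finset.sum_congr rfl (fun a _ => step1 a)]
  rw [Finset.sum_coe_sort L (fun v => if v ∈ D ∧ G.Adj w v then (1 : ZMod 2) else 0)]
  rw [← Finset.sum_filter]
  have hfe : L.filter (fun v => v ∈ D ∧ G.Adj w v) = D.filter (G.Adj w) := by
    ext v
    simp only [Finset.mem_filter]
    constructor
    · rintro ⟨-, hvD, hadj⟩; exact ⟨hvD, hadj⟩
    · rintro ⟨hvD, hadj⟩; exact ⟨hD hvD, hvD, hadj⟩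
  rw [hfe, Finset.sum_const, nsmul_eq_mul, mul_one]

lemma mem_ker_iff (G : SimpleGraph V) (L : Finset V) (x : {y // y ∈ L} → ZMod 2) :
    x ∈ LinearMap.ker ((cutM G L)ᵀ.mulVecLin) ↔
      ∀ b : {y // y ∈ Lᶜ}, ∑ a : {y // y ∈ L},
        (if G.Adj a.1 b.1 then (1 : ZMod 2) else 0) * x a = 0 := by
  rw [LinearMap.mem_ker, funext_iff]
  rfl

/-- The number of subsets `D` with `D ∪ Odd(D) ⊆ L` is `2 ^ (|L| - cutrk L)`. -/
lemma Sset_card (G : SimpleGraph V) (L : Finset V) :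
    (Finset.univ.powerset.filter fun D : Finset V => D ∪ oddNbhd G D ⊆ L).card
      = 2 ^ (kdim G L) := by
  set f := (cutM G L)ᵀ.mulVecLin with hf
  set Sset := Finset.univ.powerset.filter fun D : Finset V => D ∪ oddNbhd G D ⊆ L with hS
  have hmemS : ∀ {D : Finset V}, D ∈ Sset ↔ D ∪ oddNbhd G D ⊆ L := by
    intro D; simp [hS, Finset.mem_filter, Finset.mem_powerset]
  have hker : ∀ (D : Finset V), D ∈ Sset →
      (fun a : {y // y ∈ L} => if a.1 ∈ D then (1 : ZMod 2) else 0) ∈ LinearMap.ker f := by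
    intro D hD
    rw [hf, mem_ker_iff]
    intro b
    have hDL : D ⊆ L := (Finset.subset_union_left).trans (hmemS.1 hD)
    rw [sum_indicator G L b.1 D hDL _ (fun a => by by_cases h : a.1 ∈ D <;> simp [h])]
    apply cast_card_even
    by_contra hodd
    have : b.1 ∈ oddNbhd G D := (mem_oddNbhd G).2 (Nat.not_even_iff_odd.1 hodd)
    have hbL : b.1 ∈ L := (hmemS.1 hD) (Finset.mem_union_right _ this)
    exact (Finset.mem_compl.1 b.2) hbL
  let Φ : {D // D ∈ Sset} → ↥(LinearMap.ker f) :=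
    fun Dh => ⟨fun a => if a.1 ∈ Dh.1 then (1 : ZMod 2) else 0, hker Dh.1 Dh.2⟩
  have hbij : Function.Bijective Φ := by
    constructor
    · rintro ⟨D, hD⟩ ⟨D', hD'⟩ hEq
      have hDL : D ⊆ L := (Finset.subset_union_left).trans (hmemS.1 hD)
      have hDL' : D' ⊆ L := (Finset.subset_union_left).trans (hmemS.1 hD')
      have hEq' := congrArg Subtype.val hEq
      simp only [Φ] at hEq'
      ext v
      constructor
      · intro hv
        have hvL : v ∈ L := hDL hv
        have := congrFun hEq' ⟨v, hvL⟩
        simp only [hv, if_pos] at this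
        by_contra hv'
        rw [if_neg hv'] at this
        exact one_ne_zero this
      · intro hv
        have hvL : v ∈ L := hDL' hv
        have := congrFun hEq' ⟨v, hvL⟩
        simp only [hv, if_pos] at this
        by_contra hv'
        rw [if_neg hv'] at this
        exact one_ne_zero this.symm
    · rintro ⟨x, hx⟩
      set D : Finset V := L.filter (fun v => ∃ h : v ∈ L, x ⟨v, h⟩ = 1) with hDdef
      have hx' : ∀ a : {y // y ∈ L}, (a.1 ∈ D ↔ x a = 1) := by
        intro a
        constructor
        · intro ha
          obtain ⟨-, h, hxa⟩ := Finset.mem_filter.1 ha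
          have : (⟨a.1, h⟩ : {y // y ∈ L}) = a := Subtype.ext rfl
          rwa [this] at hxa
        · intro ha
          exact Finset.mem_filter.2 ⟨a.2, a.2, ha⟩
      have hDL : D ⊆ L := Finset.filter_subset _ _
      have hDS : D ∈ Sset := by
        rw [hmemS]
        apply Finset.union_subset hDL
        intro w hw
        by_contra hwL
        have hb : w ∈ Lᶜ := Finset.mem_compl.2 hwL
        have h0 := (mem_ker_iff G L x).1 hx ⟨w, hb⟩
        rw [sum_indicator G L w D hDL x hx'] at h0
        have := (cast_card_eq_zero_iff _).1 h0
        exact (Nat.not_even_iff_odd.2 ((mem_oddNbhd G).1 hw)) this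
      refine ⟨⟨D, hDS⟩, ?_⟩
      apply Subtype.ext
      funext a
      simp only [Φ]
      by_cases h : a.1 ∈ D
      · rw [if_pos h, ((hx' a).1 h)]
      · rw [if_neg h]
        rcases zmod2_cases (x a) with h0 | h1
        · exact h0.symm
        · exact absurd ((hx' a).2 h1) h
  have h1 : Sset.card = Nat.card {D // D ∈ Sset} := by
    rw [Nat.card_eq_fintype_card, Fintype.card_coe]
  have h2 : Nat.card {D // D ∈ Sset} = Nat.card ↥(LinearMap.ker f) :=
    Nat.card_eq_of_bijective Φ hbij
  have h3 : Nat.card ↥(LinearMap.ker f) = 2 ^ (kdim G L) := by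
    rw [Nat.card_eq_fintype_card]
    rw [Module.card_eq_pow_finrank (K := ZMod 2) (V := ↥(LinearMap.ker f))]
    rw [ZMod.card]
    rfl
  rw [h1, h2, h3]

lemma Sset_eq (hL : IsMLS G L) :
    (Finset.univ.powerset.filter fun D : Finset V => D ∪ oddNbhd G D ⊆ L)
      = insert ∅ (Gen G L) := by
  ext D
  simp only [Finset.mem_filter, Finset.mem_powerset, Finset.subset_univ, true_and,
    Finset.mem_insert, mem_gen, Gen]
  constructor
  · intro h
    rcases eq_or_ne D ∅ with h0 | h0
    · exact Or.inl h0
    · exact Or.inr (sub_gen hL h (Finset.nonempty_iff_ne_empty.2 h0))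
  · rintro (rfl | h)
    · rw [oddNbhd_empty, Finset.union_empty]
      exact Finset.empty_subset L
    · exact le_of_eq h

end MLSaux

open MLSaux in
theorem MLS_generators (G : SimpleGraph V) (L : Finset V) (hL : IsMLS G L) :
    ((Finset.univ.powerset.filter fun D : Finset V => D ∪ oddNbhd G D = L).card = 1 ∨
      ((Finset.univ.powerset.filter fun D : Finset V => D ∪ oddNbhd G D = L).card = 3 ∧
        (∃ D₀ D₁ : Finset V, D₀ ≠ D₁ ∧
          Finset.univ.powerset.filter (fun D : Finset V => D ∪ oddNbhd G D = L) =
            {D₀, D₁, D₀ ∆ D₁}) ∧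
        Even L.card)) ∧
    (L.card - cutrk G L = 1 ∨ L.card - cutrk G L = 2) ∧
    (L.card - cutrk G L = 2 → Even L.card) := by
  have hGen := gen_main hL
  have hnotmem : ∅ ∉ Gen G L := fun h => empty_not_gen hL (mem_gen.1 h)
  have hcard1 : (Gen G L).card + 1 = 2 ^ kdim G L := by
    rw [← Finset.card_insert_of_notMem hnotmem, ← Sset_eq hL, Sset_card G L]
  have hra := rank_add G L
  have hk : L.card - cutrk G L = kdim G L := by omega
  refine ⟨hGen, ?_, ?_⟩
  · rcases hGen with h1 | ⟨h3, -, -⟩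
    · left
      rw [hk]
      have h2k : (2 : ℕ) ^ kdim G L = 2 ^ 1 := by rw [pow_one]; omega
      exact (Nat.pow_right_injective (le_refl 2) h2k).symm ▸ rfl
    · right
      rw [hk]
      have h2k : (2 : ℕ) ^ kdim G L = 2 ^ 2 := by norm_num; omega
      exact (Nat.pow_right_injective (le_refl 2) h2k).symm ▸ rfl
  · intro h2
    rcases hGen with h1 | ⟨-, -, heven⟩
    · exfalso
      have hkd : kdim G L = 2 := by omega
      rw [hkd] at hcard1
      norm_num at hcard1
      omega
    · exact heven
end

section
/- If D₀ and D₁ are two distinct generators of a minimal local set L, then D₀ △ D₁ is also a generator of L and L = D₀ ∪ D₁. -/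
open Finset
open scoped Classical symmDiff

variable {V : Type*} [Fintype V] [DecidableEq V]

lemma card_symmDiff_parity (s t : Finset V) :
    (s ∆ t).card + 2 * (s ∩ t).card = s.card + t.card := by
  have hd : Disjoint (s \ t) (t \ s) := disjoint_sdiff_sdiff
  have h1 : (s \ t).card + (s ∩ t).card = s.card := by
    rw [← Finset.card_union_of_disjoint (Finset.disjoint_sdiff_inter s t)]
    congr 1
    rw [Finset.sdiff_union_inter]
  have h2 : (t \ s).card + (t ∩ s).card = t.card := by
    rw [← Finset.card_union_of_disjoint (Finset.disjoint_sdiff_inter t s)]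
    congr 1
    rw [Finset.sdiff_union_inter]
  have h3 : (s ∆ t).card = (s \ t).card + (t \ s).card := by
    rw [symmDiff_def, Finset.sup_eq_union, Finset.card_union_of_disjoint hd]
  rw [Finset.inter_comm t s] at h2
  omega

lemma oddNbhd_symmDiff (G : SimpleGraph V) (A B : Finset V) :
    oddNbhd G (A ∆ B) = oddNbhd G A ∆ oddNbhd G B := by
  ext v
  simp only [Finset.mem_symmDiff, oddNbhd, Finset.mem_filter, Finset.mem_univ, true_and,
    Finset.mem_sdiff]
  have hfil : (A ∆ B).filter (G.Adj v) = A.filter (G.Adj v) ∆ B.filter (G.Adj v) := by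
    ext u
    simp only [Finset.mem_filter, Finset.mem_symmDiff, Finset.mem_sdiff]
    tauto
  rw [hfil]
  have key := card_symmDiff_parity (A.filter (G.Adj v)) (B.filter (G.Adj v))
  rw [Nat.odd_iff, Nat.odd_iff, Nat.odd_iff]
  omega

theorem MLS_two_generators (G : SimpleGraph V) (L D₀ D₁ : Finset V) (hL : IsMLS G L)
    (h₀ : D₀ ∪ oddNbhd G D₀ = L) (h₁ : D₁ ∪ oddNbhd G D₁ = L) (hne : D₀ ≠ D₁) :
    (D₀ ∆ D₁) ∪ oddNbhd G (D₀ ∆ D₁) = L ∧ L = D₀ ∪ D₁ := by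
  set D := D₀ ∆ D₁ with hD
  have hDne : D.Nonempty := Finset.symmDiff_nonempty.mpr hne
  have hsub : D ∪ oddNbhd G D ⊆ L := by
    intro v hv
    rcases Finset.mem_union.mp hv with hv | hv
    · rcases Finset.mem_symmDiff.mp hv with ⟨h, _⟩ | ⟨h, _⟩
      · exact h₀ ▸ Finset.mem_union_left _ h
      · exact h₁ ▸ Finset.mem_union_left _ h
    · rw [hD, oddNbhd_symmDiff] at hv
      rcases Finset.mem_symmDiff.mp hv with ⟨h, _⟩ | ⟨h, _⟩
      · exact h₀ ▸ Finset.mem_union_right _ h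
      · exact h₁ ▸ Finset.mem_union_right _ h
  have hloc : IsLocalSet G (D ∪ oddNbhd G D) :=
    ⟨hDne.mono Finset.subset_union_left, D, rfl⟩
  have heq : D ∪ oddNbhd G D = L := by
    by_contra h
    exact hL.2 _ (lt_of_le_of_ne hsub h) hloc
  refine ⟨heq, ?_⟩
  apply Finset.Subset.antisymm
  · intro v hv
    by_contra hnot
    rw [Finset.mem_union] at hnot
    push_neg at hnot
    obtain ⟨hv0, hv1⟩ := hnot
    have ho0 : v ∈ oddNbhd G D₀ := by
      rcases Finset.mem_union.mp (h₀ ▸ hv : v ∈ D₀ ∪ oddNbhd G D₀) with h | h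
      · exact absurd h hv0
      · exact h
    have ho1 : v ∈ oddNbhd G D₁ := by
      rcases Finset.mem_union.mp (h₁ ▸ hv : v ∈ D₁ ∪ oddNbhd G D₁) with h | h
      · exact absurd h hv1
      · exact h
    have hvD : v ∈ D ∪ oddNbhd G D := heq ▸ hv
    rcases Finset.mem_union.mp hvD with h | h
    · rcases Finset.mem_symmDiff.mp h with ⟨h', _⟩ | ⟨h', _⟩
      · exact hv0 h'
      · exact hv1 h'
    · rw [hD, oddNbhd_symmDiff] at h
      rcases Finset.mem_symmDiff.mp h with ⟨_, h'⟩ | ⟨_, h'⟩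
      · exact h' ho1
      · exact h' ho0
  · intro v hv
    rcases Finset.mem_union.mp hv with h | h
    · exact h₀ ▸ Finset.mem_union_left _ h
    · exact h₁ ▸ Finset.mem_union_left _ h
end

section
/- Let G_k be the graph on vertices u₀,…,u_{k−1}, v₀,…,v_{k−1} with edges exactly the pairs (u_i, v_j) with i ≠ j (complete bipartite minus a perfect matching). Then for every ω ⊆ {0,…,k−1} of odd cardinality, the set L_ω = {u_i : i ∈ ω} ∪ {v_i : i ∉ ω} is a minimal local set of size k. In particular G_k has at least 2^{k−1} distinct minimal local sets. -/
open Finset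
open scoped Classical symmDiff

variable {V : Type*} [Fintype V] [DecidableEq V]

/-- The complete bipartite graph `K_{k,k}` minus a perfect matching:
`u i = Sum.inl i` is adjacent to `v j = Sum.inr j` iff `i ≠ j`. -/
def bipartiteMinusMatching (k : ℕ) : SimpleGraph (Fin k ⊕ Fin k) :=
  SimpleGraph.fromRel fun x y => ∃ i j : Fin k, x = Sum.inl i ∧ y = Sum.inr j ∧ i ≠ j

section BMM
open Sum
variable {k : ℕ}

lemma bmm_adj_lr (i j : Fin k) : (bipartiteMinusMatching k).Adj (inl i) (inr j) ↔ i ≠ j := by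
  simp [bipartiteMinusMatching]
lemma bmm_adj_rl (i j : Fin k) : (bipartiteMinusMatching k).Adj (inr j) (inl i) ↔ i ≠ j := by
  simp [bipartiteMinusMatching]
lemma bmm_adj_ll (i j : Fin k) : ¬(bipartiteMinusMatching k).Adj (inl i) (inl j) := by
  simp [bipartiteMinusMatching]
lemma bmm_adj_rr (i j : Fin k) : ¬(bipartiteMinusMatching k).Adj (inr i) (inr j) := by
  simp [bipartiteMinusMatching]

noncomputable def Dr (D : Finset (Fin k ⊕ Fin k)) : Finset (Fin k) :=
  univ.filter fun j => inr j ∈ D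
noncomputable def Dl (D : Finset (Fin k ⊕ Fin k)) : Finset (Fin k) :=
  univ.filter fun i => inl i ∈ D

lemma filter_adj_inl (D : Finset (Fin k ⊕ Fin k)) (i : Fin k) :
    D.filter ((bipartiteMinusMatching k).Adj (inl i)) = ((Dr D).erase i).image inr := by
  ext x
  cases x with
  | inl a => simp [bmm_adj_ll]
  | inr b => simp [bmm_adj_lr, Dr, and_comm, ne_comm, eq_comm]

lemma filter_adj_inr (D : Finset (Fin k ⊕ Fin k)) (j : Fin k) :
    D.filter ((bipartiteMinusMatching k).Adj (inr j)) = ((Dl D).erase j).image inl := by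
  ext x
  cases x with
  | inl a => simp [bmm_adj_rl, Dl, and_comm, ne_comm, eq_comm]
  | inr b => simp [bmm_adj_rr]

lemma mem_oddNbhd_inl (D : Finset (Fin k ⊕ Fin k)) (i : Fin k) :
    inl i ∈ oddNbhd (bipartiteMinusMatching k) D ↔ Odd ((Dr D).erase i).card := by
  simp [oddNbhd, filter_adj_inl, Finset.card_image_of_injective _ inr_injective]

lemma mem_oddNbhd_inr (D : Finset (Fin k ⊕ Fin k)) (j : Fin k) :
    inr j ∈ oddNbhd (bipartiteMinusMatching k) D ↔ Odd ((Dl D).erase j).card := by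
  simp [oddNbhd, filter_adj_inr, Finset.card_image_of_injective _ inl_injective]

lemma odd_card_erase_of_mem {s : Finset (Fin k)} {i : Fin k} (h : i ∈ s) :
    Odd (s.erase i).card ↔ Even s.card := by
  rw [Finset.card_erase_of_mem h]
  rcases Nat.exists_eq_add_of_le (Finset.one_le_card.2 ⟨i, h⟩) with ⟨m, hm⟩
  simp [hm, Nat.even_add_one, Nat.odd_iff, Nat.even_iff] at *
  omega

lemma odd_card_erase_of_not_mem {s : Finset (Fin k)} {i : Fin k} (h : i ∉ s) :
    Odd (s.erase i).card ↔ Odd s.card := by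
  rw [Finset.erase_eq_of_notMem h]

lemma mem_L_inl (ω : Finset (Fin k)) (i : Fin k) :
    inl i ∈ ω.image Sum.inl ∪ ωᶜ.image Sum.inr ↔ i ∈ ω := by simp
lemma mem_L_inr (ω : Finset (Fin k)) (j : Fin k) :
    inr j ∈ ω.image Sum.inl ∪ ωᶜ.image Sum.inr ↔ j ∉ ω := by simp

lemma oddNbhd_image_inl (ω : Finset (Fin k)) (hω : Odd ω.card) :
    oddNbhd (bipartiteMinusMatching k) (ω.image Sum.inl) = ωᶜ.image Sum.inr := by
  have hDr : Dr (ω.image Sum.inl) = ∅ := by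
    ext j; simp [Dr]
  have hDl : Dl (ω.image Sum.inl) = ω := by
    ext i; simp [Dl]
  ext x
  cases x with
  | inl a => simp [mem_oddNbhd_inl, hDr]
  | inr b =>
      rw [mem_oddNbhd_inr, hDl]
      by_cases hb : b ∈ ω
      · rw [odd_card_erase_of_mem hb]
        simp [Nat.not_even_iff_odd.2 hω, hb]
      · rw [odd_card_erase_of_not_mem hb]
        simp [hω, hb]

/-- Key rigidity lemma: any local set contained in `L_ω` equals `L_ω`. -/
lemma key (ω : Finset (Fin k)) (hω : Odd ω.card) (D : Finset (Fin k ⊕ Fin k))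
    (hsub : D ∪ oddNbhd (bipartiteMinusMatching k) D ⊆ ω.image Sum.inl ∪ ωᶜ.image Sum.inr)
    (hne : (D ∪ oddNbhd (bipartiteMinusMatching k) D).Nonempty) :
    D ∪ oddNbhd (bipartiteMinusMatching k) D = ω.image Sum.inl ∪ ωᶜ.image Sum.inr := by
  set G := bipartiteMinusMatching k
  set L := ω.image Sum.inl ∪ ωᶜ.image Sum.inr with hL
  set α := Dl D with hαdef
  set β := Dr D with hβdef
  have hmemα : ∀ i, i ∈ α ↔ inl i ∈ D := by intro i; simp [hαdef, Dl]
  have hmemβ : ∀ j, j ∈ β ↔ inr j ∈ D := by intro j; simp [hβdef, Dr]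
  have hα : α ⊆ ω := fun i hi =>
    (mem_L_inl ω i).1 (hsub (mem_union_left _ ((hmemα i).1 hi)))
  have hβ : ∀ j ∈ β, j ∉ ω := fun j hj =>
    (mem_L_inr ω j).1 (hsub (mem_union_left _ ((hmemβ j).1 hj)))
  by_cases hodd : Odd β.card
  · -- case |β| odd : β = ωᶜ, and L ⊆ B
    have claim1 : ∀ i, i ∉ β → i ∈ ω := by
      intro i hi
      have : inl i ∈ oddNbhd G D := by
        rw [mem_oddNbhd_inl, ← hβdef, odd_card_erase_of_not_mem hi]; exact hodd
      exact (mem_L_inl ω i).1 (hsub (mem_union_right _ this))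
    apply Finset.Subset.antisymm hsub
    intro x hx
    cases x with
    | inl a =>
        have ha : a ∈ ω := (mem_L_inl ω a).1 hx
        have : a ∉ β := fun h => hβ a h ha
        refine mem_union_right _ ?_
        rw [mem_oddNbhd_inl, ← hβdef, odd_card_erase_of_not_mem this]; exact hodd
    | inr b =>
        have hb : b ∉ ω := (mem_L_inr ω b).1 hx
        have : b ∈ β := by by_contra h; exact hb (claim1 b h)
        exact mem_union_left _ ((hmemβ b).1 this)
  · -- case |β| even : β = ∅
    have heven : Even β.card := Nat.not_odd_iff_even.1 hodd
    have hβe : β = ∅ := by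
      rw [Finset.eq_empty_iff_forall_notMem]
      intro i hi
      have : inl i ∈ oddNbhd G D := by
        rw [mem_oddNbhd_inl, ← hβdef, odd_card_erase_of_mem hi]; exact heven
      exact hβ i hi ((mem_L_inl ω i).1 (hsub (mem_union_right _ this)))
    by_cases haodd : Odd α.card
    · -- |α| odd : α = ω, B = L
      have hωα : ω ⊆ α := by
        intro j hj
        by_contra h
        have : inr j ∈ oddNbhd G D := by
          rw [mem_oddNbhd_inr, ← hαdef, odd_card_erase_of_not_mem h]; exact haodd
        exact (mem_L_inr ω j).1 (hsub (mem_union_right _ this)) hj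
      have hαω : α = ω := Finset.Subset.antisymm hα hωα
      apply Finset.Subset.antisymm hsub
      intro x hx
      cases x with
      | inl a =>
          have : a ∈ α := hαω ▸ (mem_L_inl ω a).1 hx
          exact mem_union_left _ ((hmemα a).1 this)
      | inr b =>
          have hb : b ∉ α := hαω ▸ (mem_L_inr ω b).1 hx
          refine mem_union_right _ ?_
          rw [mem_oddNbhd_inr, ← hαdef, odd_card_erase_of_not_mem hb]; exact haodd
    · -- |α| even : α = ∅, D = ∅, contradiction with nonempty
      have haeven : Even α.card := Nat.not_odd_iff_even.1 haodd
      have hαe : α = ∅ := by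
        rw [Finset.eq_empty_iff_forall_notMem]
        intro j hj
        have : inr j ∈ oddNbhd G D := by
          rw [mem_oddNbhd_inr, ← hαdef, odd_card_erase_of_mem hj]; exact haeven
        exact (mem_L_inr ω j).1 (hsub (mem_union_right _ this)) (hα hj)
      have hDe : D = ∅ := by
        rw [Finset.eq_empty_iff_forall_notMem]
        intro x hx
        cases x with
        | inl a =>
            have : a ∈ α := (hmemα a).2 hx
            simp [hαe] at this
        | inr b =>
            have : b ∈ β := (hmemβ b).2 hx
            simp [hβe] at this
      exfalso
      rcases hne with ⟨x, hx⟩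
      rw [hDe] at hx
      simp only [Finset.empty_union] at hx
      simp [oddNbhd] at hx
end BMM

open Sum in
theorem bipartiteMinusMatching_MLS (k : ℕ) (hk : 1 ≤ k) :
    (∀ ω : Finset (Fin k), Odd ω.card →
      IsMLS (bipartiteMinusMatching k) (ω.image Sum.inl ∪ ωᶜ.image Sum.inr) ∧
        (ω.image Sum.inl ∪ ωᶜ.image Sum.inr).card = k) ∧
    2 ^ (k - 1) ≤
      (Finset.univ.powerset.filter fun L : Finset (Fin k ⊕ Fin k) =>
        IsMLS (bipartiteMinusMatching k) L).card := by
  have main : ∀ ω : Finset (Fin k), Odd ω.card →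
      IsMLS (bipartiteMinusMatching k) (ω.image Sum.inl ∪ ωᶜ.image Sum.inr) ∧
        (ω.image Sum.inl ∪ ωᶜ.image Sum.inr).card = k := by
    intro ω hω
    have hωne : ω.Nonempty := Finset.card_pos.1 hω.pos
    have hLne : (ω.image Sum.inl ∪ ωᶜ.image Sum.inr).Nonempty := by
      rcases hωne with ⟨i, hi⟩
      exact ⟨inl i, (mem_L_inl ω i).2 hi⟩
    refine ⟨⟨⟨hLne, ω.image Sum.inl, by rw [oddNbhd_image_inl ω hω]⟩, ?_⟩, ?_⟩
    · rintro B hB ⟨hBne, D, rfl⟩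
      exact hB.ne (key ω hω D hB.subset hBne)
    · have hdisj : Disjoint (ω.image (Sum.inl : Fin k → Fin k ⊕ Fin k)) (ωᶜ.image Sum.inr) := by
        rw [Finset.disjoint_left]
        intro x hx hx'
        simp only [Finset.mem_image] at hx hx'
        rcases hx with ⟨i, _, rfl⟩
        rcases hx' with ⟨j, _, hj⟩
        exact absurd hj (by simp)
      rw [Finset.card_union_of_disjoint hdisj,
        Finset.card_image_of_injective _ inl_injective,
        Finset.card_image_of_injective _ inr_injective,
        Finset.card_add_card_compl, Fintype.card_fin]
  refine ⟨main, ?_⟩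
  have z : Fin k := ⟨0, hk⟩
  have hSE : (univ.filter fun ω : Finset (Fin k) => Odd ω.card).card =
      (univ.filter fun ω : Finset (Fin k) => ¬ Odd ω.card).card := by
    apply Finset.card_bij'
      (fun ω _ => if (⟨0, hk⟩ : Fin k) ∈ ω then ω.erase ⟨0, hk⟩ else insert ⟨0, hk⟩ ω)
      (fun ω _ => if (⟨0, hk⟩ : Fin k) ∈ ω then ω.erase ⟨0, hk⟩ else insert ⟨0, hk⟩ ω)
    · intro a _
      by_cases h : (⟨0, hk⟩ : Fin k) ∈ a
      · simp [h, Finset.insert_erase h]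
      · simp [h, Finset.erase_insert h]
    · intro a _
      by_cases h : (⟨0, hk⟩ : Fin k) ∈ a
      · simp [h, Finset.insert_erase h]
      · simp [h, Finset.erase_insert h]
    · intro a ha
      rw [Finset.mem_filter] at ha ⊢
      refine ⟨Finset.mem_univ _, ?_⟩
      by_cases h : (⟨0, hk⟩ : Fin k) ∈ a
      · have h1 : 1 ≤ a.card := Finset.one_le_card.2 ⟨_, h⟩
        simp only [h, if_true, Finset.card_erase_of_mem h, Nat.odd_iff] at *
        omega
      · simp only [h, if_false, Finset.card_insert_of_notMem h, Nat.odd_iff] at *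
        omega
    · intro a ha
      rw [Finset.mem_filter] at ha ⊢
      refine ⟨Finset.mem_univ _, ?_⟩
      by_cases h : (⟨0, hk⟩ : Fin k) ∈ a
      · have h1 : 1 ≤ a.card := Finset.one_le_card.2 ⟨_, h⟩
        simp only [h, if_true, Finset.card_erase_of_mem h, Nat.odd_iff] at *
        omega
      · simp only [h, if_false, Finset.card_insert_of_notMem h, Nat.odd_iff] at *
        omega
  have htot : (univ.filter fun ω : Finset (Fin k) => Odd ω.card).card +
      (univ.filter fun ω : Finset (Fin k) => ¬ Odd ω.card).card = 2 ^ k := by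
    rw [Finset.card_filter_add_card_filter_not, Finset.card_univ,
      Fintype.card_finset, Fintype.card_fin]
  have h2 : 2 ^ (k - 1) * 2 = 2 ^ k := by
    rw [← pow_succ]
    congr 1
    omega
  have hScard : (univ.filter fun ω : Finset (Fin k) => Odd ω.card).card = 2 ^ (k - 1) := by
    omega
  rw [← hScard]
  apply Finset.card_le_card_of_injOn (fun ω => ω.image Sum.inl ∪ ωᶜ.image Sum.inr)
  · intro ω hω
    rw [Finset.mem_coe, Finset.mem_filter] at hω
    simp only [Finset.mem_coe, Finset.mem_filter, Finset.mem_powerset]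
    exact ⟨Finset.subset_univ _, (main ω hω.2).1⟩
  · intro ω₁ h₁ ω₂ h₂ heq
    simp only at heq
    ext i
    rw [← mem_L_inl ω₁ i, heq, mem_L_inl ω₂ i]
end

section
/- If all minimal local sets of a finite simple graph G of order n have size at least m, then the number of minimal local sets of G is at least C(n, ⌊n/2⌋+1) / C(n−m, ⌈n/2⌉−1), where C denotes binomial coefficients. (In particular, every subset of size ⌊n/2⌋+1 contains a minimal local set.) -/
open Finset
open scoped Classical symmDiff

variable {V : Type*} [Fintype V] [DecidableEq V]

/-- Parity of cardinalities under symmetric difference. -/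
lemma card_symmDiff_aux {α : Type*} [DecidableEq α] (s t : Finset α) :
    (s ∆ t).card + 2 * (s ∩ t).card = s.card + t.card := by
  have h1 := Finset.card_inter_add_card_sdiff s t
  have h2 := Finset.card_inter_add_card_sdiff t s
  have hd : Disjoint (s \ t) (t \ s) := disjoint_sdiff_sdiff
  have h3 : (s ∆ t).card = (s \ t).card + (t \ s).card := by
    rw [symmDiff_def, Finset.sup_eq_union, Finset.card_union_of_disjoint hd]
  rw [Finset.inter_comm t s] at h2
  omega

lemma exists_local_subset (G : SimpleGraph V) (A : Finset V)
    (hA : A.card = Fintype.card V / 2 + 1) : ∃ L ⊆ A, IsLocalSet G L := by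
  -- pigeonhole on D ↦ oddNbhd G D ∩ Aᶜ
  have hAle : A.card ≤ Fintype.card V := Finset.card_le_univ A
  have hclt : Aᶜ.card < A.card := by
    rw [Finset.card_compl]; omega
  have hpow : (Aᶜ.powerset).card < (A.powerset).card := by
    rw [Finset.card_powerset, Finset.card_powerset]
    exact Nat.pow_lt_pow_right (by norm_num) hclt
  have hmaps : ∀ D ∈ A.powerset, oddNbhd G D ∩ Aᶜ ∈ Aᶜ.powerset := fun D _ => by
    simp [Finset.mem_powerset]
  obtain ⟨D, hD, D', hD', hne, heq⟩ :=
    Finset.exists_ne_map_eq_of_card_lt_of_maps_to hpow hmaps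
  rw [Finset.mem_powerset] at hD hD'
  set E := D ∆ D' with hE
  have hEsub : E ⊆ A := by
    intro x hx
    rcases Finset.mem_symmDiff.1 hx with ⟨h, _⟩ | ⟨h, _⟩
    · exact hD h
    · exact hD' h
  have hEne : E.Nonempty := by
    rw [Finset.nonempty_iff_ne_empty]
    intro h
    rw [hE, ← Finset.bot_eq_empty, symmDiff_eq_bot] at h
    exact hne h
  -- oddNbhd of E is inside A
  have hOdd : oddNbhd G E ⊆ A := by
    intro v hv
    by_contra hvA
    have hvc : v ∈ Aᶜ := Finset.mem_compl.2 hvA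
    rw [oddNbhd, Finset.mem_filter] at hv
    have hv' := hv.2
    -- filter over E equals symmDiff of filters
    have hfilt : E.filter (G.Adj v) = (D.filter (G.Adj v)) ∆ (D'.filter (G.Adj v)) := by
      ext x
      simp only [Finset.mem_filter, hE, Finset.mem_symmDiff]
      tauto
    have hparity : (Odd (D.filter (G.Adj v)).card) ↔ Odd (D'.filter (G.Adj v)).card := by
      constructor <;> intro h
      · have h1 : v ∈ oddNbhd G D ∩ Aᶜ := by
          simp [oddNbhd, Finset.mem_filter, h, hvc]
        rw [heq] at h1
        simp only [Finset.mem_inter, oddNbhd, Finset.mem_filter] at h1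
        exact h1.1.2
      · have h1 : v ∈ oddNbhd G D' ∩ Aᶜ := by
          simp [oddNbhd, Finset.mem_filter, h, hvc]
        rw [← heq] at h1
        simp only [Finset.mem_inter, oddNbhd, Finset.mem_filter] at h1
        exact h1.1.2
    have e1 : (D.filter (G.Adj v)).card % 2 = 1 ↔ (D'.filter (G.Adj v)).card % 2 = 1 := by
      simpa [Nat.odd_iff] using hparity
    have e2 : ((D.filter (G.Adj v)) ∆ (D'.filter (G.Adj v))).card % 2 = 1 := by
      rw [← hfilt]; exact Nat.odd_iff.mp hv'
    have e3 := card_symmDiff_aux (D.filter (G.Adj v)) (D'.filter (G.Adj v))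
    omega
  exact ⟨E ∪ oddNbhd G E, Finset.union_subset hEsub hOdd,
    ⟨hEne.mono Finset.subset_union_left, E, rfl⟩⟩

lemma exists_MLS_subset (G : SimpleGraph V) (A : Finset V)
    (hA : A.card = Fintype.card V / 2 + 1) : ∃ L ⊆ A, IsMLS G L := by
  obtain ⟨L0, hL0A, hL0⟩ := exists_local_subset G A hA
  have hne : (A.powerset.filter fun B => IsLocalSet G B).Nonempty :=
    ⟨L0, Finset.mem_filter.2 ⟨Finset.mem_powerset.2 hL0A, hL0⟩⟩
  obtain ⟨L, hL, hmin⟩ :=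
    Finset.exists_min_image (A.powerset.filter fun B => IsLocalSet G B) Finset.card hne
  rw [Finset.mem_filter, Finset.mem_powerset] at hL
  refine ⟨L, hL.1, hL.2, fun B hB hBloc => ?_⟩
  have : L.card ≤ B.card :=
    hmin B (Finset.mem_filter.2 ⟨Finset.mem_powerset.2 (hB.subset.trans hL.1), hBloc⟩)
  exact absurd (Finset.card_lt_card hB) (by omega)

theorem MLS_count_lower_bound (G : SimpleGraph V) (m : ℕ)
    (hm : ∀ L : Finset V, IsMLS G L → m ≤ L.card) :
    (∀ A : Finset V, A.card = Fintype.card V / 2 + 1 → ∃ L ⊆ A, IsMLS G L) ∧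
      Nat.choose (Fintype.card V) (Fintype.card V / 2 + 1) /
          Nat.choose (Fintype.card V - m) ((Fintype.card V + 1) / 2 - 1) ≤
        (Finset.univ.powerset.filter fun A : Finset V => IsMLS G A).card := by
  refine ⟨fun A hA => exists_MLS_subset G A hA, ?_⟩
  set n := Fintype.card V with hn
  set k := n / 2 + 1 with hk
  set c := Nat.choose (n - m) ((n + 1) / 2 - 1) with hc
  set M := Finset.univ.powerset.filter fun A : Finset V => IsMLS G A with hM
  rcases Nat.eq_zero_or_pos c with hc0 | hcpos
  · simp [hc0]
  -- key : (n+1)/2 - 1 = n - k  (when k ≤ n... check n=0: k=1, n-k=0, (n+1)/2-1=0 ✓)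
  have hnk : (n + 1) / 2 - 1 = n - k := by omega
  set K := Finset.powersetCard k (Finset.univ : Finset V) with hK
  -- choice function
  have hchoice : ∀ A ∈ K, ∃ L ⊆ A, IsMLS G L := by
    intro A hA
    rw [hK, Finset.mem_powersetCard_univ] at hA
    exact exists_MLS_subset G A hA
  choose! f hf1 hf2 using hchoice
  have hfmaps : ∀ A ∈ K, f A ∈ M := fun A hA =>
    Finset.mem_filter.2 ⟨Finset.mem_powerset.2 (Finset.subset_univ _), hf2 A hA⟩
  have hcount : K.card = ∑ L ∈ M, (K.filter fun A => f A = L).card :=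
    Finset.card_eq_sum_card_fiberwise hfmaps
  have hfiber : ∀ L ∈ M, (K.filter fun A => f A = L).card ≤ c := by
    intro L hLM
    rw [hM, Finset.mem_filter] at hLM
    have hLm : m ≤ L.card := hm L hLM.2
    -- map A ↦ A \ L injectively into powersetCard (k - L.card) Lᶜ
    have hinj : ∀ A ∈ K.filter fun A => f A = L, ∀ B ∈ K.filter fun A => f A = L,
        A \ L = B \ L → A = B := by
      intro A hA B hB hAB
      rw [Finset.mem_filter] at hA hB
      have hLA : L ⊆ A := hA.2 ▸ hf1 A hA.1
      have hLB : L ⊆ B := hB.2 ▸ hf1 B hB.1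
      rw [← Finset.sdiff_union_of_subset hLA, ← Finset.sdiff_union_of_subset hLB, hAB]
    have hmapsto : ∀ A ∈ K.filter fun A => f A = L,
        A \ L ∈ Finset.powersetCard (k - L.card) Lᶜ := by
      intro A hA
      rw [Finset.mem_filter] at hA
      have hLA : L ⊆ A := hA.2 ▸ hf1 A hA.1
      have hAk : A.card = k := (Finset.mem_powersetCard_univ.1 hA.1)
      rw [Finset.mem_powersetCard]
      exact ⟨fun x hx => Finset.mem_compl.2 (Finset.mem_sdiff.1 hx).2,
        by rw [Finset.card_sdiff_of_subset hLA, hAk]⟩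
    have hb := Finset.card_le_card_of_injOn _ hmapsto (fun A hA B hB => hinj A hA B hB)
    rw [Finset.card_powersetCard, Finset.card_compl] at hb
    refine hb.trans ?_
    by_cases hLk : k ≤ L.card
    · have h0 : k - L.card = 0 := by omega
      rw [h0, Nat.choose_zero_right]; exact hcpos
    · by_cases hkn : k ≤ n
      · have h2 : k - L.card ≤ n - L.card := by omega
        have h1 : (n - L.card) - (k - L.card) = n - k := by omega
        calc Nat.choose (n - L.card) (k - L.card)
            = Nat.choose (n - L.card) (n - k) := by rw [← Nat.choose_symm h2, h1]
          _ ≤ Nat.choose (n - m) (n - k) := Nat.choose_le_choose _ (by omega)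
          _ = c := by rw [hc, hnk]
      · have hLn : L.card ≤ n := by rw [hn]; exact Finset.card_le_univ L
        rw [Nat.choose_eq_zero_of_lt (by omega)]; exact Nat.zero_le _
  have hKc : K.card = Nat.choose n k := by
    rw [hK, Finset.card_powersetCard, Finset.card_univ]
  have hle : K.card ≤ M.card * c := by
    rw [hcount]
    calc ∑ L ∈ M, (K.filter fun A => f A = L).card ≤ ∑ _L ∈ M, c :=
          Finset.sum_le_sum hfiber
      _ = M.card * c := by rw [Finset.sum_const, smul_eq_mul]
  rw [← hKc]
  calc K.card / c ≤ (M.card * c) / c := Nat.div_le_div_right hle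
    _ = M.card := Nat.mul_div_cancel _ hcpos
end
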